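/- arXiv:2512.17463 — 6 statements merged into one kernel-verified Lean document; each statement's English description precedes it below -/
import Mathlib

section
/- Let n ≥ 3, δ > 0, T > 0. Let s : (0,T) → ℝ and γ : (0,T) → (0,∞) be continuously differentiable, and let h be a positive function on D = {(x,t) : 0 < t < T, s(t) < x < s(t)+δ} that is four times continuously differentiable in x and once continuously differentiable in t on D and satisfies ∂_t h + ∂_x(h^n ∂_x³h) = 0 on D. Assume: (i) for each t ∈ (0,T), h(x,t)^n ∂_x³h(x,t) → 0 as x → s(t)⁺; (ii) for each t ∈ (0,T), (h(x,t) − γ(t)(x − s(t)))/(x − s(t)) → 0 as x → s(t)⁺; (iii) for each t ∈ (0,T), ∂_t h(x,t) + γ(t)·s'(t) → 0 as x → s(t)⁺. Then s is constant on (0,T). -/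
open Real Filter Set Topology

lemma mono_le {F : ℝ → ℝ} {x y : ℝ} (hxy : x ≤ y)
    (hc : ContinuousOn F (Icc x y))
    (hd : ∀ u ∈ Ioo x y, ∃ F', HasDerivAt F F' u ∧ 0 ≤ F') : F x ≤ F y := by
  have hmono : MonotoneOn F (Icc x y) := by
    apply monotoneOn_of_deriv_nonneg (convex_Icc x y) hc
    · intro u hu
      rw [interior_Icc] at hu
      exact ((hd u hu).choose_spec.1.differentiableAt).differentiableWithinAt
    · intro u hu
      rw [interior_Icc] at hu
      obtain ⟨F', hF', h0⟩ := hd u hu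
      rw [hF'.deriv]; exact h0
  exact hmono (left_mem_Icc.2 hxy) (right_mem_Icc.2 hxy) hxy

lemma id3_eq (F : ℝ → ℝ) : iteratedDeriv 3 F = deriv (deriv (deriv F)) := by
  rw [show (3:ℕ) = 2+1 from rfl, iteratedDeriv_succ,
    show (2:ℕ) = 1+1 from rfl, iteratedDeriv_succ, iteratedDeriv_one]

/-- Core blow-up lemma. -/
lemma blowup {a b c : ℝ} (hab : a < b) (hc : 0 < c) {f : ℝ → ℝ}
    (hC : ContDiffOn ℝ 4 f (Ioo a b))
    (h3 : ∀ x ∈ Ioo a b, c / (x - a)^2 ≤ iteratedDeriv 3 f x)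
    (h0 : Tendsto f (𝓝[>] a) (𝓝 0)) :
    Tendsto (fun x => f x / (x - a)) (𝓝[>] a) atTop := by
  set f1 := deriv f with hf1
  set f2 := deriv f1 with hf2
  set f3 := deriv f2 with hf3
  have hopen : IsOpen (Ioo a b) := isOpen_Ioo
  have hC1 : ContDiffOn ℝ 3 f1 (Ioo a b) := hC.deriv_of_isOpen hopen (by norm_num)
  have hC2 : ContDiffOn ℝ 2 f2 (Ioo a b) := hC1.deriv_of_isOpen hopen (by norm_num)
  have h3' : ∀ x ∈ Ioo a b, c / (x - a)^2 ≤ f3 x := by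
    intro x hx
    have := h3 x hx
    rwa [id3_eq] at this
  have hdf : ∀ u ∈ Ioo a b, DifferentiableAt ℝ f u := fun u hu =>
    (hC.differentiableOn (by norm_num)).differentiableAt (hopen.mem_nhds hu)
  have hdf1 : ∀ u ∈ Ioo a b, DifferentiableAt ℝ f1 u := fun u hu =>
    (hC1.differentiableOn (by norm_num)).differentiableAt (hopen.mem_nhds hu)
  have hdf2 : ∀ u ∈ Ioo a b, DifferentiableAt ℝ f2 u := fun u hu =>
    (hC2.differentiableOn (by norm_num)).differentiableAt (hopen.mem_nhds hu)
  set y : ℝ := (a + b)/2 with hy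
  have hay : a < y := by simp only [hy]; linarith
  have hyb : y < b := by simp only [hy]; linarith
  have hIyo : Ioo a y ⊆ Ioo a b := Ioo_subset_Ioo le_rfl hyb.le
  -- Step A
  set c2 : ℝ := f2 y + c * (y - a)⁻¹ with hc2
  have stepA : ∀ x ∈ Ioo a y, f2 x ≤ c2 - c * (x - a)⁻¹ := by
    intro x hx
    have hsub : Icc x y ⊆ Ioo a b := fun u hu =>
      ⟨lt_of_lt_of_le hx.1 hu.1, lt_of_le_of_lt hu.2 hyb⟩
    have key : (fun u => f2 u + c * (u - a)⁻¹) x ≤ (fun u => f2 u + c * (u - a)⁻¹) y := by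
      apply mono_le hx.2.le
      · apply ContinuousOn.add ((hC2.continuousOn).mono hsub)
        apply ContinuousOn.mul continuousOn_const
        apply ContinuousOn.inv₀ (by fun_prop)
        intro u hu
        have : a < u := lt_of_lt_of_le hx.1 hu.1
        exact sub_ne_zero_of_ne this.ne'
      · intro u hu
        have huab : u ∈ Ioo a b := hsub (Ioo_subset_Icc_self hu)
        have hua : (0:ℝ) < u - a := by simp [sub_pos]; exact huab.1
        refine ⟨f3 u + c * (-1/(u - a)^2), ?_, ?_⟩
        · have H := ((hdf2 u huab).hasDerivAt).add
            ((((hasDerivAt_id u).sub_const a).inv hua.ne').const_mul c)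
          exact H
        · have h1 := h3' u huab
          have h2 : (0:ℝ) < (u - a)^2 := by positivity
          have h4 : c * (-1/(u - a)^2) = -(c/(u-a)^2) := by ring
          rw [h4]; linarith
    simp only at key
    linarith [key]
  -- Step B
  set K : ℝ := f1 y - c2 * y + c * Real.log (y - a) - |c2| * (|a| + |y|) with hK
  have stepB : ∀ x ∈ Ioo a y, K - c * Real.log (x - a) ≤ f1 x := by
    intro x hx
    have hsub : Icc x y ⊆ Ioo a b := fun u hu =>
      ⟨lt_of_lt_of_le hx.1 hu.1, lt_of_le_of_lt hu.2 hyb⟩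
    have key : (fun u => -f1 u + c2 * u - c * Real.log (u - a)) x ≤
        (fun u => -f1 u + c2 * u - c * Real.log (u - a)) y := by
      apply mono_le hx.2.le
      · apply ContinuousOn.sub
        · exact (((hC1.continuousOn).mono hsub).neg).add (by fun_prop)
        · apply ContinuousOn.mul continuousOn_const
          apply ContinuousOn.log (by fun_prop)
          intro u hu
          have : a < u := lt_of_lt_of_le hx.1 hu.1
          exact sub_ne_zero_of_ne this.ne'
      · intro u hu
        have huab : u ∈ Ioo a b := hsub (Ioo_subset_Icc_self hu)
        have huay : u ∈ Ioo a y := ⟨lt_of_lt_of_le hx.1 hu.1.le, hu.2⟩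
        have hua : (0:ℝ) < u - a := by simp [sub_pos]; exact huab.1
        have hlog : HasDerivAt (fun v => Real.log (v - a)) (1/(u - a)) u := by
          have := ((hasDerivAt_id u).sub_const a).log hua.ne'
          simpa using this
        refine ⟨-f2 u + c2 - c * (1/(u - a)), ?_, ?_⟩
        · have H := (((hdf1 u huab).hasDerivAt).neg.add
            ((hasDerivAt_id u).const_mul c2)).sub (hlog.const_mul c)
          exact H.congr_deriv (by rw [hf2]; ring)
        · have h1 := stepA u huay
          have h5 : c * (1/(u-a)) = c * (u-a)⁻¹ := by ring
          rw [h5]; linarith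
    simp only at key
    have habs : -(|c2| * (|a| + |y|)) ≤ c2 * x := by
      have h1 : |c2 * x| ≤ |c2| * (|a| + |y|) := by
        rw [abs_mul]
        apply mul_le_mul_of_nonneg_left _ (abs_nonneg c2)
        have hxle : x ≤ |y| := le_trans hx.2.le (le_abs_self y)
        have hxge : -|a| ≤ x := le_trans (neg_abs_le a) hx.1.le
        rw [abs_le]
        constructor
        · linarith [abs_nonneg y]
        · linarith [abs_nonneg a]
      linarith [abs_le.1 h1]
    rw [hK]
    linarith
  -- Step C: f1 → +∞
  have hsubnhd : Ioo a y ∈ 𝓝[>] a := Ioo_mem_nhdsGT_of_mem ⟨le_rfl, hay⟩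
  have hxa_tendsto : Tendsto (fun x => x - a) (𝓝[>] a) (𝓝[>] (0:ℝ)) := by
    apply tendsto_nhdsWithin_of_tendsto_nhds_of_eventually_within
    · have : Tendsto (fun x : ℝ => x - a) (𝓝 a) (𝓝 (a - a)) :=
        (continuous_id.sub continuous_const).tendsto a
      simpa using this.mono_left nhdsWithin_le_nhds
    · filter_upwards [self_mem_nhdsWithin] with x hx
      simpa [Set.mem_Ioi, sub_pos] using hx
  have hlogbot : Tendsto (fun x => Real.log (x - a)) (𝓝[>] a) atBot :=
    Real.tendsto_log_nhdsGT_zero.comp hxa_tendsto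
  have stepC : Tendsto f1 (𝓝[>] a) atTop := by
    have hbd : (fun x => K - c * Real.log (x - a)) ≤ᶠ[𝓝[>] a] f1 := by
      filter_upwards [hsubnhd] with x hx using stepB x hx
    apply tendsto_atTop_mono' (𝓝[>] a) hbd
    · have h1 : Tendsto (fun x => c * Real.log (x - a)) (𝓝[>] a) atBot :=
        hlogbot.const_mul_atBot hc
      have h2 : Tendsto (fun x => -(c * Real.log (x - a))) (𝓝[>] a) atTop :=
        tendsto_neg_atBot_atTop.comp h1
      have := tendsto_atTop_add_const_left (𝓝[>] a) K h2
      simpa [sub_eq_add_neg] using this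
  -- Step D
  have stepD : ∀ M : ℝ, ∀ᶠ x in 𝓝[>] a, M * (x - a) ≤ f x := by
    intro M
    have hev : {x | M ≤ f1 x} ∩ Ioo a y ∈ 𝓝[>] a :=
      inter_mem (stepC.eventually (eventually_ge_atTop M)) hsubnhd
    obtain ⟨w, hw, hsubw⟩ := mem_nhdsGT_iff_exists_Ioo_subset.1 hev
    have hwa : a < w := hw
    have hIw : Ioo a w ∈ 𝓝[>] a := Ioo_mem_nhdsGT_of_mem ⟨le_rfl, hwa⟩
    filter_upwards [hIw] with x hx
    obtain ⟨hM, hxy⟩ := hsubw hx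
    -- for z in (a,x): f z + M*(x-z) ≤ f x
    have hstep : ∀ z ∈ Ioo a x, f z + M * (x - z) ≤ f x := by
      intro z hz
      have hsub2 : Icc z x ⊆ Ioo a w := fun u hu => ⟨lt_of_lt_of_le hz.1 hu.1,
        lt_of_le_of_lt hu.2 hx.2⟩
      have key : (fun u => f u - M * u) z ≤ (fun u => f u - M * u) x := by
        apply mono_le hz.2.le
        · apply ContinuousOn.sub _ (by fun_prop)
          exact hC.continuousOn.mono fun u hu => hIyo (hsubw (hsub2 hu)).2
        · intro u hu
          have huw : u ∈ Ioo a w := hsub2 (Ioo_subset_Icc_self hu)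
          obtain ⟨hMu, huy⟩ := hsubw huw
          refine ⟨f1 u - M * 1, ?_, ?_⟩
          · exact ((hdf u (hIyo huy)).hasDerivAt).sub ((hasDerivAt_id u).const_mul M)
          · simp only [mul_one, sub_nonneg]; exact hMu
      simp only at key
      linarith
    -- let z → a⁺
    have hlim : Tendsto (fun z => f z + M * (x - z)) (𝓝[>] a) (𝓝 (0 + M * (x - a))) := by
      apply Tendsto.add h0
      have : Tendsto (fun z : ℝ => M * (x - z)) (𝓝 a) (𝓝 (M * (x - a))) := by
        exact (continuous_const.mul (continuous_const.sub continuous_id)).tendsto a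
      exact this.mono_left nhdsWithin_le_nhds
    rw [zero_add] at hlim
    apply le_of_tendsto hlim
    filter_upwards [Ioo_mem_nhdsGT_of_mem ⟨le_rfl, hx.1⟩] with z hz using hstep z hz
  -- conclude
  rw [tendsto_atTop]
  intro M
  filter_upwards [stepD M, self_mem_nhdsWithin] with x hx hx'
  have hxa : (0:ℝ) < x - a := sub_pos.2 hx'
  rw [le_div_iff₀ hxa]
  linarith

lemma id3_cmul (σ : ℝ) (F : ℝ → ℝ) :
    iteratedDeriv 3 (fun x => σ * F x) = fun x => σ * iteratedDeriv 3 F x := by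
  have e : ∀ G : ℝ → ℝ, deriv (fun x => σ * G x) = fun x => σ * deriv G x :=
    fun G => deriv_const_mul_field' σ
  rw [id3_eq, id3_eq, e, e, e]


/-- Regularity implies fixed support for the thin-film equation with `n ≥ 3`:
if `h` is a `C^{4,1}` positive solution of `∂ₜh + ∂ₓ(hⁿ ∂ₓ³h) = 0` on
`D = {(x,t) : 0 < t < T, s(t) < x < s(t)+δ}` which satisfies the no-flux condition
`hⁿ ∂ₓ³h → 0` and the expansions `h = γ(t)(x−s(t)) + o(x−s(t))`,
`∂ₜh = −γ(t) s'(t) + o(1)` as `x → s(t)⁺`, with `γ > 0`, then `s` is constant. -/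
theorem stmt_0 (n δ T : ℝ) (hn : 3 ≤ n) (hδ : 0 < δ) (hT : 0 < T)
    (s γ : ℝ → ℝ)
    (hs : ContDiffOn ℝ 1 s (Set.Ioo 0 T))
    (hγ : ContDiffOn ℝ 1 γ (Set.Ioo 0 T))
    (hγpos : ∀ t ∈ Set.Ioo (0:ℝ) T, 0 < γ t)
    (h : ℝ → ℝ → ℝ)
    (hpos : ∀ t ∈ Set.Ioo (0:ℝ) T, ∀ x ∈ Set.Ioo (s t) (s t + δ), 0 < h x t)
    -- four continuous derivatives in `x`
    (hCx : ∀ t ∈ Set.Ioo (0:ℝ) T,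
      ContDiffOn ℝ 4 (fun x => h x t) (Set.Ioo (s t) (s t + δ)))
    -- one derivative in `t`, continuous on `D`
    (hCt : ∀ t ∈ Set.Ioo (0:ℝ) T, ∀ x ∈ Set.Ioo (s t) (s t + δ),
      DifferentiableAt ℝ (fun τ => h x τ) t)
    (hCt' : ContinuousOn (fun p : ℝ × ℝ => deriv (fun τ => h p.1 τ) p.2)
      {p : ℝ × ℝ | p.2 ∈ Set.Ioo (0:ℝ) T ∧ p.1 ∈ Set.Ioo (s p.2) (s p.2 + δ)})
    -- the thin-film equation `∂ₜ h + ∂ₓ (hⁿ ∂ₓ³ h) = 0` on `D`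
    (hPDE : ∀ t ∈ Set.Ioo (0:ℝ) T, ∀ x ∈ Set.Ioo (s t) (s t + δ),
      deriv (fun τ => h x τ) t
        + deriv (fun y => (h y t) ^ n * iteratedDeriv 3 (fun z => h z t) y) x = 0)
    -- (i) no-flux condition
    (hflux : ∀ t ∈ Set.Ioo (0:ℝ) T,
      Tendsto (fun x => (h x t) ^ n * iteratedDeriv 3 (fun z => h z t) x)
        (𝓝[>] (s t)) (𝓝 0))
    -- (ii) `h(x,t) = γ(t)(x − s(t)) + o(x − s(t))`
    (hlin : ∀ t ∈ Set.Ioo (0:ℝ) T,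
      Tendsto (fun x => (h x t - γ t * (x - s t)) / (x - s t)) (𝓝[>] (s t)) (𝓝 0))
    -- (iii) `∂ₜ h(x,t) = −γ(t) s'(t) + o(1)`
    (htlin : ∀ t ∈ Set.Ioo (0:ℝ) T,
      Tendsto (fun x => deriv (fun τ => h x τ) t + γ t * deriv s t)
        (𝓝[>] (s t)) (𝓝 0)) :
    ∀ t₁ ∈ Set.Ioo (0:ℝ) T, ∀ t₂ ∈ Set.Ioo (0:ℝ) T, s t₁ = s t₂ := by
  have key : ∀ t ∈ Set.Ioo (0:ℝ) T, deriv s t = 0 := by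
    intro t ht
    by_contra hst
    have hγ0 : 0 < γ t := hγpos t ht
    set a : ℝ := s t with ha
    set L : ℝ := γ t * deriv s t with hLdef
    have hL : L ≠ 0 := mul_ne_zero hγ0.ne' hst
    set σ : ℝ := if 0 < L then 1 else -1 with hσdef
    have hσL : 0 < σ * L := by
      rcases lt_trichotomy L 0 with hl | hl | hl
      · rw [hσdef, if_neg (by linarith)]; linarith
      · exact absurd hl hL
      · rw [hσdef, if_pos hl]; linarith
    set g := fun x => (h x t) ^ n * iteratedDeriv 3 (fun z => h z t) x with hgdef
    have haδ : a < a + δ := by linarith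
    have hCf4 : ContDiffOn ℝ 4 (fun x => h x t) (Ioo a (a + δ)) := hCx t ht
    have hoI : IsOpen (Ioo a (a + δ)) := isOpen_Ioo
    have hC3' : ContDiffOn ℝ 1 (iteratedDeriv 3 (fun z => h z t)) (Ioo a (a + δ)) := by
      rw [id3_eq]
      have d1 : ContDiffOn ℝ 3 (deriv fun x => h x t) (Ioo a (a + δ)) :=
        hCf4.deriv_of_isOpen hoI (by norm_num)
      have d2 : ContDiffOn ℝ 2 (deriv (deriv fun x => h x t)) (Ioo a (a + δ)) :=
        d1.deriv_of_isOpen hoI (by norm_num)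
      exact d2.deriv_of_isOpen hoI (by norm_num)
    have hgd : ∀ x ∈ Ioo a (a + δ), DifferentiableAt ℝ g x := by
      intro x hx
      have h1 : DifferentiableAt ℝ (fun y => h y t) x :=
        (hCf4.differentiableOn (by norm_num)).differentiableAt (hoI.mem_nhds hx)
      have h2 : DifferentiableAt ℝ (fun y => (h y t) ^ n) x :=
        h1.rpow_const (Or.inl (hpos t ht x hx).ne')
      have h3 : DifferentiableAt ℝ (iteratedDeriv 3 fun z => h z t) x :=
        (hC3'.differentiableOn one_ne_zero).differentiableAt (hoI.mem_nhds hx)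
      exact h2.mul h3
    have hgcont : ContinuousOn g (Ioo a (a + δ)) :=
      fun x hx => (hgd x hx).continuousAt.continuousWithinAt
    have hIδ : Ioo a (a + δ) ∈ 𝓝[>] a := Ioo_mem_nhdsGT_of_mem ⟨le_rfl, haδ⟩
    -- derivative of g tends to L
    have hderivg : Tendsto (fun x => σ * deriv g x) (𝓝[>] a) (𝓝 (σ * L)) := by
      have h1 : Tendsto (fun x => deriv (fun τ => h x τ) t) (𝓝[>] a) (𝓝 (-L)) := by
        have h2 := (htlin t ht).sub (tendsto_const_nhds (x := L))
        rw [zero_sub] at h2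
        apply h2.congr
        intro x
        rw [← hLdef]
        ring
      have h3 : Tendsto (fun x => σ * -(deriv (fun τ => h x τ) t)) (𝓝[>] a)
          (𝓝 (σ * L)) := by
        have := (h1.neg.const_mul σ)
        simpa using this
      apply h3.congr'
      filter_upwards [hIδ] with x hx
      have hp := hPDE t ht x hx
      have : deriv g x = -(deriv (fun τ => h x τ) t) := by
        rw [hgdef]; linarith
      rw [this]
    have hm : ∀ᶠ x in 𝓝[>] a, σ * L / 2 ≤ σ * deriv g x :=
      (hderivg.eventually (eventually_gt_nhds (by linarith : σ * L / 2 < σ * L))).mono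
        fun x hx => hx.le
    -- bounds on h
    have hq := hlin t ht
    have hxsub : Tendsto (fun x : ℝ => x - a) (𝓝[>] a) (𝓝 0) := by
      have : Tendsto (fun x : ℝ => x - a) (𝓝 a) (𝓝 (a - a)) :=
        (continuous_id.sub continuous_const).tendsto a
      simpa using this.mono_left nhdsWithin_le_nhds
    have hbound : ∀ᶠ x in 𝓝[>] a,
        γ t / 2 * (x - a) ≤ h x t ∧ h x t ≤ 2 * γ t * (x - a) := by
      have e1 : ∀ᶠ x in 𝓝[>] a, (h x t - γ t * (x - a)) / (x - a) < γ t :=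
        hq.eventually (eventually_lt_nhds hγ0)
      have e2 : ∀ᶠ x in 𝓝[>] a, -(γ t / 2) < (h x t - γ t * (x - a)) / (x - a) :=
        hq.eventually (eventually_gt_nhds (by linarith))
      filter_upwards [e1, e2, self_mem_nhdsWithin] with x h1 h2 hx'
      have hxa : (0:ℝ) < x - a := sub_pos.2 hx'
      have hff : h x t = (h x t - γ t * (x - a)) / (x - a) * (x - a) + γ t * (x - a) := by
        field_simp
        ring
      constructor
      · rw [hff]; nlinarith
      · rw [hff]; nlinarith
    have hsmall : ∀ᶠ x in 𝓝[>] a, x - a ≤ 1 := by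
      filter_upwards [Ioo_mem_nhdsGT_of_mem (Set.left_mem_Ico.2 (by linarith : a < a + 1))]
        with x hx
      linarith [hx.2]
    -- extract an interval
    have hall := (hm.and (hbound.and (hsmall.and hIδ)))
    obtain ⟨b, hbmem, hsubE⟩ := mem_nhdsGT_iff_exists_Ioo_subset.1 hall
    have hab : a < b := hbmem
    have hsubδ : Ioo a b ⊆ Ioo a (a + δ) := fun x hx => (hsubE hx).2.2.2
    -- G1 : lower bound for σ g
    have hG1 : ∀ x ∈ Ioo a b, σ * L / 2 * (x - a) ≤ σ * g x := by
      intro x hx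
      have claim : ∀ z ∈ Ioo a x, σ * g z + σ * L / 2 * (x - z) ≤ σ * g x := by
        intro z hz
        have hsub2 : Icc z x ⊆ Ioo a b := fun u hu =>
          ⟨lt_of_lt_of_le hz.1 hu.1, lt_of_le_of_lt hu.2 hx.2⟩
        have key2 : (fun u => σ * g u - σ * L / 2 * u) z ≤
            (fun u => σ * g u - σ * L / 2 * u) x := by
          apply mono_le hz.2.le
          · apply ContinuousOn.sub _ (by fun_prop)
            exact (hgcont.mono (fun u hu => hsubδ (hsub2 hu))).const_smul σ
          · intro u hu
            have hub : u ∈ Ioo a b := hsub2 (Ioo_subset_Icc_self hu)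
            refine ⟨σ * deriv g u - σ * L / 2 * 1, ?_, ?_⟩
            · exact (((hgd u (hsubδ hub)).hasDerivAt).const_mul σ).sub
                ((hasDerivAt_id u).const_mul (σ * L / 2))
            · have := (hsubE hub).1
              simp only [mul_one, sub_nonneg]
              exact this
        simp only at key2
        linarith
      have hlim : Tendsto (fun z => σ * g z + σ * L / 2 * (x - z)) (𝓝[>] a)
          (𝓝 (σ * 0 + σ * L / 2 * (x - a))) := by
        apply Tendsto.add ((hflux t ht).const_mul σ)
        have : Tendsto (fun z : ℝ => σ * L / 2 * (x - z)) (𝓝 a)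
            (𝓝 (σ * L / 2 * (x - a))) :=
          (continuous_const.mul (continuous_const.sub continuous_id)).tendsto a
        exact this.mono_left nhdsWithin_le_nhds
      rw [mul_zero, zero_add] at hlim
      apply le_of_tendsto hlim
      filter_upwards [Ioo_mem_nhdsGT_of_mem ⟨le_rfl, hx.1⟩] with z hz using claim z hz
    -- the blown-up function
    set f := fun x => σ * h x t with hfdef
    set c₀ : ℝ := (σ * L / 2) / (2 * γ t) ^ n with hc₀def
    have h2γ : (0:ℝ) < 2 * γ t := by linarith
    have hc₀ : 0 < c₀ := div_pos (by linarith) (Real.rpow_pos_of_pos h2γ n)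
    have hG2 : ∀ x ∈ Ioo a b, c₀ / (x - a) ^ 2 ≤ iteratedDeriv 3 f x := by
      intro x hx
      obtain ⟨hm', ⟨hlo, hup⟩, hd1, hxδ⟩ := hsubE hx
      have hd : (0:ℝ) < x - a := sub_pos.2 hx.1
      have hpx : 0 < h x t := hpos t ht x hxδ
      have hpowpos : 0 < (h x t) ^ n := Real.rpow_pos_of_pos hpx n
      have hpow : (h x t) ^ n ≤ (2 * γ t * (x - a)) ^ n :=
        Real.rpow_le_rpow hpx.le hup (by linarith)
      have hI3 : iteratedDeriv 3 f x = σ * iteratedDeriv 3 (fun z => h z t) x := by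
        rw [hfdef, id3_cmul]
      have hgb := hG1 x hx
      have hgx : σ * g x = (h x t) ^ n * (σ * iteratedDeriv 3 (fun z => h z t) x) := by
        rw [hgdef]; ring
      have hdivpos : (0:ℝ) < (2 * γ t * (x - a)) ^ n :=
        Real.rpow_pos_of_pos (by positivity) n
      have step1 : (σ * L / 2 * (x - a)) / ((2 * γ t * (x - a)) ^ n) ≤
          σ * iteratedDeriv 3 (fun z => h z t) x := by
        have hval : σ * iteratedDeriv 3 (fun z => h z t) x = σ * g x / (h x t) ^ n := by
          rw [hgx]; field_simp
        rw [hval]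
        exact div_le_div₀ (by nlinarith) hgb hpowpos hpow
      have step2 : c₀ / (x - a) ^ 2 ≤
          (σ * L / 2 * (x - a)) / ((2 * γ t * (x - a)) ^ n) := by
        have hmulr : (2 * γ t * (x - a)) ^ n = (2 * γ t) ^ n * (x - a) ^ n :=
          Real.mul_rpow h2γ.le hd.le
        have hrw : (σ * L / 2 * (x - a)) / ((2 * γ t * (x - a)) ^ n)
            = c₀ * ((x - a) ^ ((1:ℝ) - n)) := by
          rw [hmulr, hc₀def, Real.rpow_sub hd, Real.rpow_one]
          have h1 : ((2 * γ t) ^ n) ≠ 0 := (Real.rpow_pos_of_pos h2γ n).ne'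
          have h2 : ((x - a) ^ n) ≠ 0 := (Real.rpow_pos_of_pos hd n).ne'
          field_simp
        have hrw2 : c₀ / (x - a) ^ 2 = c₀ * ((x - a) ^ (-2 : ℝ)) := by
          rw [Real.rpow_neg hd.le]
          rw [show ((2:ℝ)) = ((2:ℕ):ℝ) by norm_num, Real.rpow_natCast]
          rw [div_eq_mul_inv]
        rw [hrw, hrw2]
        apply mul_le_mul_of_nonneg_left _ hc₀.le
        exact Real.rpow_le_rpow_of_exponent_ge hd hd1 (by linarith)
      rw [hI3]
      exact le_trans step2 step1
    -- f → 0
    have hf0 : Tendsto f (𝓝[>] a) (𝓝 0) := by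
      have hh0 : Tendsto (fun x => h x t) (𝓝[>] a) (𝓝 0) := by
        have hprod : Tendsto (fun x => (h x t - γ t * (x - a)) / (x - a) * (x - a)
            + γ t * (x - a)) (𝓝[>] a) (𝓝 (0 * 0 + γ t * 0)) :=
          (hq.mul hxsub).add (hxsub.const_mul (γ t))
        rw [mul_zero, zero_add, mul_zero] at hprod
        apply hprod.congr'
        filter_upwards [self_mem_nhdsWithin] with x hx
        have hxa : (0:ℝ) < x - a := sub_pos.2 hx
        field_simp
        ring
      have h5 := hh0.const_mul σ
      rw [mul_zero] at h5
      exact h5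
    -- ContDiffOn for f
    have hCfb : ContDiffOn ℝ 4 f (Ioo a b) :=
      contDiffOn_const.mul (hCf4.mono hsubδ)
    have hbl := blowup hab hc₀ hCfb hG2 hf0
    -- the finite limit
    have hfin : Tendsto (fun x => f x / (x - a)) (𝓝[>] a) (𝓝 (σ * γ t)) := by
      have hh : Tendsto (fun x => h x t / (x - a)) (𝓝[>] a) (𝓝 (γ t)) := by
        have hsum : Tendsto (fun x => (h x t - γ t * (x - a)) / (x - a) + γ t)
            (𝓝[>] a) (𝓝 (0 + γ t)) := hq.add tendsto_const_nhds
        rw [zero_add] at hsum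
        apply hsum.congr'
        filter_upwards [self_mem_nhdsWithin] with x hx
        have hxa : (0:ℝ) < x - a := sub_pos.2 hx
        field_simp
        ring
      have := hh.const_mul σ
      apply this.congr
      intro x
      rw [hfdef]
      ring
    have e1 := hbl.eventually (eventually_ge_atTop (σ * γ t + 1))
    have e2 := hfin.eventually (eventually_lt_nhds (lt_add_one (σ * γ t)))
    obtain ⟨x, hx1, hx2⟩ := (e1.and e2).exists
    linarith
  -- conclude by MVT
  have main : ∀ t₁ ∈ Set.Ioo (0:ℝ) T, ∀ t₂ ∈ Set.Ioo (0:ℝ) T, t₁ < t₂ → s t₁ = s t₂ := by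
    intro t₁ ht₁ t₂ ht₂ hlt
    have hsubI : Icc t₁ t₂ ⊆ Ioo 0 T := fun u hu =>
      ⟨lt_of_lt_of_le ht₁.1 hu.1, lt_of_le_of_lt hu.2 ht₂.2⟩
    have hcont : ContinuousOn s (Icc t₁ t₂) := (hs.continuousOn).mono hsubI
    have hdiff : DifferentiableOn ℝ s (Ioo t₁ t₂) :=
      (hs.differentiableOn one_ne_zero).mono fun u hu => hsubI (Ioo_subset_Icc_self hu)
    obtain ⟨c, hc, hceq⟩ := exists_deriv_eq_slope s hlt hcont hdiff
    have hc0 := key c (hsubI (Ioo_subset_Icc_self hc))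
    rw [hc0] at hceq
    have hne : t₂ - t₁ ≠ 0 := sub_ne_zero.2 hlt.ne'
    have : s t₂ - s t₁ = 0 := by
      have h2 := hceq.symm
      rwa [div_eq_iff hne, zero_mul] at h2
    linarith
  intro t₁ ht₁ t₂ ht₂
  rcases lt_trichotomy t₁ t₂ with hlt | heq | hgt
  · exact main t₁ ht₁ t₂ ht₂ hlt
  · rw [heq]
  · exact (main t₂ ht₂ t₁ ht₁ hgt).symm
end

section
/- Let γ > 0 and 0 < δ < 1, and let h : (0,δ) → (0,∞) be three times differentiable with h(ξ)/(γ·ξ·(ln(1/ξ))^{1/3}) → 1 and 3ξ²·(ln(1/ξ))^{2/3}·h'''(ξ)/γ → 1 as ξ → 0⁺. Then the function ξ ↦ h(ξ)³·h'''(ξ)² is not Lebesgue integrable on (0,δ); equivalently, ∫₀^δ h(ξ)³ h'''(ξ)² dξ = +∞. -/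
open Real Filter Set Topology MeasureTheory

lemma key_nonint (ε : ℝ) (hε0 : 0 < ε) (hε1 : ε < 1) :
    ¬ IntegrableOn (fun ξ : ℝ => ξ⁻¹ * (Real.log (1/ξ)) ^ (-(1:ℝ)/3)) (Set.Ioo 0 ε) := by
  set g : ℝ → ℝ := fun ξ => ξ⁻¹ * (Real.log (1/ξ)) ^ (-(1:ℝ)/3) with hg
  intro hint
  set F : ℝ → ℝ := fun ξ => -(3/2) * (Real.log (1/ξ)) ^ ((2:ℝ)/3) with hF
  have hgpos : ∀ x : ℝ, 0 < x → x < 1 → 0 < g x := by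
    intro x hx0 hx1
    have hL : 0 < Real.log (1/x) := Real.log_pos ((one_lt_one_div hx0 hx1))
    positivity
  have hderiv : ∀ x : ℝ, 0 < x → x < 1 → HasDerivAt F (g x) x := by
    intro x hx0 hx1
    have hL : 0 < Real.log (1/x) := Real.log_pos ((one_lt_one_div hx0 hx1))
    have h1 : HasDerivAt (fun y : ℝ => Real.log (1/y)) (-x⁻¹) x := by
      have := (Real.hasDerivAt_log (ne_of_gt hx0)).neg
      have e : (fun y : ℝ => Real.log (1/y)) = -Real.log := by
        funext y; simp [one_div, Real.log_inv]
      rw [e]; exact this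
    have h2 := h1.rpow_const (p := (2:ℝ)/3) (Or.inl (ne_of_gt hL))
    have h3 := h2.const_mul (-(3/2) : ℝ)
    refine h3.congr_deriv ?_
    have : (2:ℝ)/3 - 1 = -(1:ℝ)/3 := by norm_num
    simp only [hg]
    rw [this]; ring
  have hC : ∀ a : ℝ, 0 < a → a < ε → F ε - F a ≤ ∫ x in Set.Ioo 0 ε, g x := by
    intro a ha0 haε
    have hsub : Set.Ioo a ε ⊆ Set.Ioo 0 ε := Set.Ioo_subset_Ioo (le_of_lt ha0) le_rfl
    have hii : IntervalIntegrable g volume a ε := by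
      rw [intervalIntegrable_iff_integrableOn_Ioo_of_le (le_of_lt haε)]
      exact hint.mono_set hsub
    have heq : ∫ x in a..ε, g x = F ε - F a := by
      apply intervalIntegral.integral_eq_sub_of_hasDerivAt
      · intro x hx
        rw [Set.uIcc_of_le (le_of_lt haε)] at hx
        exact hderiv x (lt_of_lt_of_le ha0 hx.1) (lt_of_le_of_lt hx.2 hε1)
      · exact hii
    rw [← heq, intervalIntegral.integral_of_le (le_of_lt haε),
      MeasureTheory.integral_Ioc_eq_integral_Ioo]
    apply MeasureTheory.setIntegral_mono_set hint
    · filter_upwards [MeasureTheory.ae_restrict_mem measurableSet_Ioo] with x hx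
      exact (hgpos x hx.1 (hx.2.trans hε1)).le
    · exact HasSubset.Subset.eventuallyLE hsub
  have hbot : Tendsto F (𝓝[>] (0:ℝ)) atBot := by
    have h1 : Tendsto (fun a : ℝ => Real.log (1/a)) (𝓝[>] (0:ℝ)) atTop := by
      have h0 : Tendsto Real.log (𝓝[>] (0:ℝ)) atBot := Real.tendsto_log_nhdsGT_zero
      have := tendsto_neg_atBot_atTop.comp h0
      refine this.congr fun a => ?_
      simp [Function.comp, one_div, Real.log_inv]
    have h2 : Tendsto (fun a : ℝ => (Real.log (1/a)) ^ ((2:ℝ)/3)) (𝓝[>] (0:ℝ)) atTop :=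
      (tendsto_rpow_atTop (by norm_num : (0:ℝ) < 2/3)).comp h1
    have h3 := tendsto_neg_atTop_atBot.comp ((h2.const_mul_atTop (by norm_num : (0:ℝ) < 3/2)))
    refine h3.congr fun a => ?_
    simp only [Function.comp, hF]; ring
  set C := ∫ x in Set.Ioo 0 ε, g x
  have hev : ∀ᶠ a in 𝓝[>] (0:ℝ), F a < F ε - C - 1 := hbot.eventually (eventually_lt_atBot _)
  have hmem : ∀ᶠ a in 𝓝[>] (0:ℝ), a ∈ Set.Ioo (0:ℝ) ε :=
    eventually_mem_set.2 (Ioo_mem_nhdsGT_of_mem ⟨le_rfl, hε0⟩)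
  obtain ⟨a, ha1, ha2⟩ := (hev.and hmem).exists
  linarith [hC a ha2.1 ha2.2]

/-- If `h > 0` is three times differentiable on `(0,δ)` with
`h(ξ) ≈ γ ξ (ln(1/ξ))^{1/3}` and `h'''(ξ) ≈ (γ/3) ξ^{−2} (ln(1/ξ))^{−2/3}` as `ξ → 0⁺`,
then `ξ ↦ h(ξ)³ h'''(ξ)²` is not Lebesgue integrable on `(0,δ)`. -/
theorem stmt_5 (γ δ : ℝ) (hγ : 0 < γ) (hδ0 : 0 < δ) (hδ1 : δ < 1)
    (h : ℝ → ℝ) (hpos : ∀ ξ ∈ Set.Ioo 0 δ, 0 < h ξ)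
    (hdiff : ∀ ξ ∈ Set.Ioo 0 δ, DifferentiableAt ℝ h ξ ∧
      DifferentiableAt ℝ (deriv h) ξ ∧ DifferentiableAt ℝ (deriv (deriv h)) ξ)
    (hasymp : Tendsto (fun ξ => h ξ / (γ * ξ * (Real.log (1/ξ)) ^ ((1:ℝ)/3)))
      (𝓝[>] 0) (𝓝 1))
    (hasymp3 : Tendsto
      (fun ξ => 3 * ξ^2 * (Real.log (1/ξ)) ^ ((2:ℝ)/3) * iteratedDeriv 3 h ξ / γ)
      (𝓝[>] 0) (𝓝 1)) :
    ¬ IntegrableOn (fun ξ => (h ξ)^3 * (iteratedDeriv 3 h ξ)^2) (Set.Ioo 0 δ) := by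
  intro hint
  set H : ℝ → ℝ := iteratedDeriv 3 h with hH
  set r : ℝ → ℝ := fun ξ =>
    (h ξ / (γ * ξ * (Real.log (1/ξ)) ^ ((1:ℝ)/3)))^3 *
    (3 * ξ^2 * (Real.log (1/ξ)) ^ ((2:ℝ)/3) * H ξ / γ)^2 with hr_def
  have hr : Tendsto r (𝓝[>] (0:ℝ)) (𝓝 1) := by
    have h2 := (hasymp.pow 3).mul (hasymp3.pow 2)
    rw [show (1:ℝ) = 1^3 * 1^2 by norm_num]
    exact h2
  have hev : ∀ᶠ ξ in 𝓝[>] (0:ℝ), (1:ℝ)/2 ≤ r ξ :=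
    hr.eventually (eventually_ge_nhds (by norm_num))
  obtain ⟨u, hu, hsub⟩ := mem_nhdsGT_iff_exists_Ioo_subset.1 hev
  set ε := min u δ with hε_def
  have hε0 : 0 < ε := lt_min hu hδ0
  have hε1 : ε < 1 := lt_of_le_of_lt (min_le_right _ _) hδ1
  have hεu : ε ≤ u := min_le_left _ _
  have hεδ : ε ≤ δ := min_le_right _ _
  set c : ℝ := γ^5 / 18 with hc
  have hcpos : 0 < c := by positivity
  set g : ℝ → ℝ := fun ξ => ξ⁻¹ * (Real.log (1/ξ)) ^ (-(1:ℝ)/3) with hg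
  -- pointwise bound on Ioo 0 ε
  have hbound : ∀ ξ ∈ Set.Ioo (0:ℝ) ε, c * g ξ ≤ (h ξ)^3 * (H ξ)^2 ∧ 0 ≤ g ξ := by
    intro ξ hξ
    have hξ0 : 0 < ξ := hξ.1
    have hξ1 : ξ < 1 := hξ.2.trans_le (hεδ.trans hδ1.le)
    have hL : 0 < Real.log (1/ξ) := Real.log_pos ((one_lt_one_div hξ0 hξ1))
    set A : ℝ := (Real.log (1/ξ)) ^ ((1:ℝ)/3) with hA_def
    have hA : 0 < A := Real.rpow_pos_of_pos hL _
    have hA3 : A^3 = Real.log (1/ξ) := by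
      rw [hA_def, ← Real.rpow_natCast (_ ^ ((1:ℝ)/3)) 3, ← Real.rpow_mul hL.le]
      norm_num
    have hA2 : (Real.log (1/ξ)) ^ ((2:ℝ)/3) = A^2 := by
      rw [hA_def, ← Real.rpow_natCast (_ ^ ((1:ℝ)/3)) 2, ← Real.rpow_mul hL.le]
      norm_num
    have hAn : (Real.log (1/ξ)) ^ (-(1:ℝ)/3) = A⁻¹ := by
      rw [hA_def, ← Real.rpow_neg_one A, ← Real.rpow_mul hL.le]
      norm_num
    have hgξ : g ξ = ξ⁻¹ * A⁻¹ := by rw [hg]; simp only [hAn]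
    have hgpos : 0 ≤ g ξ := by rw [hgξ]; positivity
    refine ⟨?_, hgpos⟩
    have hid : (h ξ)^3 * (H ξ)^2 = r ξ * ((γ^5/9) * (ξ⁻¹ * A⁻¹)) := by
      rw [hr_def]
      simp only [hA2, ← hA_def]
      field_simp
      ring
    have hrge : (1:ℝ)/2 ≤ r ξ := hsub ⟨hξ0, hξ.2.trans_le hεu⟩
    rw [hid, hgξ, hc]
    have hnn : 0 ≤ (γ^5/9) * (ξ⁻¹ * A⁻¹) := by positivity
    nlinarith [mul_le_mul_of_nonneg_right hrge hnn]
  -- c * g is integrable on Ioo 0 ε by domination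
  have hint' : IntegrableOn (fun ξ => (h ξ)^3 * (H ξ)^2) (Set.Ioo 0 ε) :=
    hint.mono_set (Set.Ioo_subset_Ioo le_rfl hεδ)
  have hgcont : ContinuousOn (fun ξ => c * g ξ) (Set.Ioo (0:ℝ) ε) := by
    apply ContinuousOn.mul continuousOn_const
    apply ContinuousOn.mul
    · exact ContinuousOn.inv₀ continuousOn_id fun x hx => ne_of_gt hx.1
    · apply ContinuousOn.rpow_const
      · apply ContinuousOn.log
        · exact ContinuousOn.div continuousOn_const continuousOn_id
            fun x hx => ne_of_gt hx.1
        · intro x hx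
          exact ne_of_gt (one_div_pos.2 hx.1)
      · intro x hx
        exact Or.inl (ne_of_gt (Real.log_pos (one_lt_one_div hx.1 (hx.2.trans_le (hεδ.trans hδ1.le)))))
  have hcg : IntegrableOn (fun ξ => c * g ξ) (Set.Ioo 0 ε) := by
    apply Integrable.mono' hint'
    · exact hgcont.aestronglyMeasurable measurableSet_Ioo
    · filter_upwards [MeasureTheory.ae_restrict_mem measurableSet_Ioo] with x hx
      obtain ⟨h1, h2⟩ := hbound x hx
      rw [Real.norm_eq_abs, abs_of_nonneg (by positivity)]
      exact h1
  have hgint : IntegrableOn g (Set.Ioo 0 ε) := by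
    have h3 : IntegrableOn (fun x => c⁻¹ * (c * g x)) (Set.Ioo 0 ε) := hcg.const_mul c⁻¹
    refine h3.congr_fun (fun x _ => ?_) measurableSet_Ioo
    field_simp
  exact key_nonint ε hε0 hε1 hgint
end

section
/- Let γ > 0 and define f : (0,1) → ℝ by f(ξ) = γ·ξ·(ln(1/ξ))^{1/3}. Then the function δ ↦ (γ³/6)·f'(δ)² − ∫_δ^{1/2} f(ξ)³·f'''(ξ)² dξ converges to a finite limit as δ → 0⁺. Moreover, each of the two terms separately is asymptotic to (γ⁵/6)·(ln(1/δ))^{2/3} as δ → 0⁺, i.e. both (γ³/6)f'(δ)²/((γ⁵/6)(ln(1/δ))^{2/3}) → 1 and (∫_δ^{1/2} f³(f''')² dξ)/((γ⁵/6)(ln(1/δ))^{2/3}) → 1. -/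
open Real Filter Set Topology MeasureTheory

noncomputable def Vv (x : ℝ) : ℝ := (-Real.log x) ^ ((1:ℝ)/3)
noncomputable def G0 (γ x : ℝ) : ℝ := γ * x * Vv x
noncomputable def G1 (γ x : ℝ) : ℝ := γ * (Vv x - 1/(3*(Vv x)^2))
noncomputable def G2 (γ x : ℝ) : ℝ := -(γ/x) * (1/(3*(Vv x)^2) + 2/(9*(Vv x)^5))
noncomputable def G3 (γ x : ℝ) : ℝ := γ/x^2 * (1/(3*(Vv x)^2) - 10/(27*(Vv x)^8))
noncomputable def HH (γ x : ℝ) : ℝ :=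
  -(γ^5) * ((Vv x)^2/6 + 5/(27*(Vv x)^4) - 10/(243*(Vv x)^10))

lemma Vv_pos {x : ℝ} (hx : x ∈ Set.Ioo (0:ℝ) 1) : 0 < Vv x := by
  have hu : 0 < -Real.log x := by have := Real.log_neg hx.1 hx.2; linarith
  exact Real.rpow_pos_of_pos hu _

lemma Vv_hasDeriv {x : ℝ} (hx : x ∈ Set.Ioo (0:ℝ) 1) :
    HasDerivAt Vv (-(1/(3*x*(Vv x)^2))) x := by
  obtain ⟨hx0, hx1⟩ := hx
  have hu : 0 < -Real.log x := by have := Real.log_neg hx0 hx1; linarith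
  have hlog : HasDerivAt (fun y : ℝ => -Real.log y) (-x⁻¹) x :=
    (Real.hasDerivAt_log hx0.ne').neg
  have h := (Real.hasDerivAt_rpow_const (p := (1:ℝ)/3) (Or.inl hu.ne')).comp x hlog
  refine h.congr_deriv (Eq.symm ?_)
  have hV2 : (Vv x)^2 = (-Real.log x) ^ ((2:ℝ)/3) := by
    rw [Vv, ← Real.rpow_natCast ((-Real.log x) ^ ((1:ℝ)/3)) 2, ← Real.rpow_mul hu.le]
    norm_num
  have h23 : ((1:ℝ)/3 - 1) = -((2:ℝ)/3) := by norm_num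
  rw [hV2, h23, Real.rpow_neg hu.le]
  have hne : (-Real.log x) ^ ((2:ℝ)/3) ≠ 0 := (Real.rpow_pos_of_pos hu _).ne'
  have hx0' : x ≠ 0 := hx0.ne'
  field_simp

lemma G0_hasDeriv (γ : ℝ) {x : ℝ} (hx : x ∈ Set.Ioo (0:ℝ) 1) :
    HasDerivAt (G0 γ) (G1 γ x) x := by
  have hv := Vv_hasDeriv hx
  have hV := (Vv_pos hx).ne'
  have hx0 : x ≠ 0 := hx.1.ne'
  have h := ((hasDerivAt_id x).const_mul γ).mul hv
  refine h.congr_deriv (Eq.symm ?_)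
  simp only [id, Pi.pow_apply, Pi.add_apply, Pi.sub_apply, Pi.div_apply, Pi.mul_apply, Pi.neg_apply]
  simp only [G1]
  field_simp
  ring

lemma G1_hasDeriv (γ : ℝ) {x : ℝ} (hx : x ∈ Set.Ioo (0:ℝ) 1) :
    HasDerivAt (G1 γ) (G2 γ x) x := by
  have hv := Vv_hasDeriv hx
  have hV := (Vv_pos hx).ne'
  have hx0 : x ≠ 0 := hx.1.ne'
  have hne : 3*(Vv x)^2 ≠ 0 := by positivity
  have h := ((hv.sub ((hasDerivAt_const x (1:ℝ)).div ((hv.pow 2).const_mul 3) hne)).const_mul γ)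
  refine h.congr_deriv (Eq.symm ?_)
  simp only [id, Pi.pow_apply, Pi.add_apply, Pi.sub_apply, Pi.div_apply, Pi.mul_apply, Pi.neg_apply]
  simp only [G2]
  field_simp
  ring

lemma G2_hasDeriv (γ : ℝ) {x : ℝ} (hx : x ∈ Set.Ioo (0:ℝ) 1) :
    HasDerivAt (G2 γ) (G3 γ x) x := by
  have hv := Vv_hasDeriv hx
  have hV := (Vv_pos hx).ne'
  have hx0 : x ≠ 0 := hx.1.ne'
  have hne2 : 3*(Vv x)^2 ≠ 0 := by positivity
  have hne5 : 9*(Vv x)^5 ≠ 0 := by positivity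
  have hA : HasDerivAt (fun y : ℝ => -(γ/y)) (γ/x^2) x := by
    have := ((hasDerivAt_const x γ).div (hasDerivAt_id x) hx0).neg
    refine this.congr_deriv (Eq.symm ?_)
    simp only [id, Pi.pow_apply, Pi.add_apply, Pi.sub_apply, Pi.div_apply, Pi.mul_apply, Pi.neg_apply]
    field_simp
    ring
  have hB := ((hasDerivAt_const x (1:ℝ)).div ((hv.pow 2).const_mul 3) hne2).add
      ((hasDerivAt_const x (2:ℝ)).div ((hv.pow 5).const_mul 9) hne5)
  have h := hA.mul hB
  refine h.congr_deriv (Eq.symm ?_)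
  simp only [id, Pi.pow_apply, Pi.add_apply, Pi.sub_apply, Pi.div_apply, Pi.mul_apply, Pi.neg_apply]
  simp only [G3]
  field_simp
  ring

lemma HH_hasDeriv (γ : ℝ) {x : ℝ} (hx : x ∈ Set.Ioo (0:ℝ) 1) :
    HasDerivAt (HH γ) ((G0 γ x)^3 * (G3 γ x)^2) x := by
  have hv := Vv_hasDeriv hx
  have hV := (Vv_pos hx).ne'
  have hx0 : x ≠ 0 := hx.1.ne'
  have hne4 : 27*(Vv x)^4 ≠ 0 := by positivity
  have hne10 : 243*(Vv x)^10 ≠ 0 := by positivity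
  have h := ((((hv.pow 2).div_const 6).add
      ((hasDerivAt_const x (5:ℝ)).div ((hv.pow 4).const_mul 27) hne4)).sub
      ((hasDerivAt_const x (10:ℝ)).div ((hv.pow 10).const_mul 243) hne10)).const_mul (-(γ^5))
  refine h.congr_deriv (Eq.symm ?_)
  simp only [id, Pi.pow_apply, Pi.add_apply, Pi.sub_apply, Pi.div_apply, Pi.mul_apply, Pi.neg_apply]
  simp only [G0, G3]
  field_simp
  ring

lemma integrand_contOn (γ : ℝ) : ContinuousOn (fun ξ => (G0 γ ξ)^3 * (G3 γ ξ)^2) (Set.Ioo 0 1) := by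
  intro x hx
  apply ContinuousAt.continuousWithinAt
  have hv : ContinuousAt Vv x := (Vv_hasDeriv hx).continuousAt
  have hV : Vv x ≠ 0 := (Vv_pos hx).ne'
  have hx0 : x ≠ 0 := hx.1.ne'
  have h0 : ContinuousAt (G0 γ) x := (G0_hasDeriv γ hx).continuousAt
  have h1 : ContinuousAt (fun y : ℝ => γ / y^2) x :=
    continuousAt_const.div (continuousAt_id.pow 2) (pow_ne_zero 2 hx0)
  have h2 : ContinuousAt (fun y : ℝ => 1/(3*(Vv y)^2)) x :=
    continuousAt_const.div (continuousAt_const.mul (hv.pow 2)) (by positivity)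
  have h3 : ContinuousAt (fun y : ℝ => 10/(27*(Vv y)^8)) x :=
    continuousAt_const.div (continuousAt_const.mul (hv.pow 8)) (by positivity)
  exact (h0.pow 3).mul (((h1.mul (h2.sub h3))).pow 2)

lemma Vv_tendsto : Tendsto Vv (𝓝[>] (0:ℝ)) atTop := by
  have h1 : Tendsto (fun x : ℝ => -Real.log x) (𝓝[>] (0:ℝ)) atTop :=
    tendsto_neg_atBot_atTop.comp Real.tendsto_log_nhdsGT_zero
  exact (tendsto_rpow_atTop (by norm_num : (0:ℝ) < 1/3)).comp h1

lemma logpow_eq {δ : ℝ} (h0 : 0 < δ) (h1 : δ < 1) :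
    (Real.log (1/δ)) ^ ((2:ℝ)/3) = (Vv δ)^2 := by
  have hu : 0 < -Real.log δ := by have := Real.log_neg h0 h1; linarith
  rw [one_div, Real.log_inv, Vv, ← Real.rpow_natCast _ 2, ← Real.rpow_mul hu.le]
  norm_num

/-- For `γ > 0` and `f(ξ) = γ ξ (ln(1/ξ))^{1/3}` on `(0,1)`, the quantity
`(γ³/6) f'(δ)² − ∫_δ^{1/2} f³ (f''')² dξ` converges to a finite limit as `δ → 0⁺`,
while each of the two terms is separately asymptotic to `(γ⁵/6)(ln(1/δ))^{2/3}`. -/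
theorem stmt_6 (γ : ℝ) (hγ : 0 < γ)
    (f : ℝ → ℝ) (hf : ∀ ξ ∈ Set.Ioo (0:ℝ) 1, f ξ = γ * ξ * (Real.log (1/ξ)) ^ ((1:ℝ)/3)) :
    (∃ L : ℝ, Tendsto (fun δ : ℝ =>
        γ^3 / 6 * (deriv f δ)^2
          - ∫ ξ in δ..(1/2 : ℝ), (f ξ)^3 * (iteratedDeriv 3 f ξ)^2)
      (𝓝[>] 0) (𝓝 L)) ∧
    Tendsto (fun δ : ℝ =>
        (γ^3 / 6 * (deriv f δ)^2) / (γ^5 / 6 * (Real.log (1/δ)) ^ ((2:ℝ)/3)))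
      (𝓝[>] 0) (𝓝 1) ∧
    Tendsto (fun δ : ℝ =>
        (∫ ξ in δ..(1/2 : ℝ), (f ξ)^3 * (iteratedDeriv 3 f ξ)^2)
          / (γ^5 / 6 * (Real.log (1/δ)) ^ ((2:ℝ)/3)))
      (𝓝[>] 0) (𝓝 1) := by
  have hγ0 : γ ≠ 0 := hγ.ne'
  have hs : IsOpen (Set.Ioo (0:ℝ) 1) := isOpen_Ioo
  have hfeq : ∀ x ∈ Set.Ioo (0:ℝ) 1, f x = G0 γ x := by
    intro x hx
    rw [hf x hx]
    simp [G0, Vv, one_div, Real.log_inv]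
  -- derivative chain
  have hd1 : ∀ x ∈ Set.Ioo (0:ℝ) 1, HasDerivAt f (G1 γ x) x := by
    intro x hx
    exact (G0_hasDeriv γ hx).congr_of_eventuallyEq
      (eventually_of_mem (hs.mem_nhds hx) hfeq)
  have hderiv1 : Set.EqOn (deriv f) (G1 γ) (Set.Ioo 0 1) := fun x hx => (hd1 x hx).deriv
  have hd2 : ∀ x ∈ Set.Ioo (0:ℝ) 1, HasDerivAt (deriv f) (G2 γ x) x := by
    intro x hx
    exact (G1_hasDeriv γ hx).congr_of_eventuallyEq
      (eventually_of_mem (hs.mem_nhds hx) hderiv1)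
  have hderiv2 : Set.EqOn (deriv (deriv f)) (G2 γ) (Set.Ioo 0 1) := fun x hx => (hd2 x hx).deriv
  have hd3 : ∀ x ∈ Set.Ioo (0:ℝ) 1, HasDerivAt (deriv (deriv f)) (G3 γ x) x := by
    intro x hx
    exact (G2_hasDeriv γ hx).congr_of_eventuallyEq
      (eventually_of_mem (hs.mem_nhds hx) hderiv2)
  have hiter3 : ∀ x ∈ Set.Ioo (0:ℝ) 1, iteratedDeriv 3 f x = G3 γ x := by
    intro x hx
    have : iteratedDeriv 3 f = deriv (deriv (deriv f)) := by
      rw [show (3:ℕ) = 2+1 from rfl, iteratedDeriv_succ,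
        show (2:ℕ) = 1+1 from rfl, iteratedDeriv_succ, iteratedDeriv_one]
    rw [this]
    exact (hd3 x hx).deriv
  -- the integral
  have hInt : ∀ δ ∈ Set.Ioo (0:ℝ) (1/2),
      (∫ ξ in δ..(1/2 : ℝ), (f ξ)^3 * (iteratedDeriv 3 f ξ)^2) = HH γ (1/2) - HH γ δ := by
    intro δ hδ
    have hsub : Set.uIcc δ (1/2 : ℝ) ⊆ Set.Ioo (0:ℝ) 1 := by
      rw [Set.uIcc_of_le hδ.2.le]
      intro ξ hξ
      exact ⟨lt_of_lt_of_le hδ.1 hξ.1, lt_of_le_of_lt hξ.2 (by norm_num)⟩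
    have hEqOn : Set.EqOn (fun ξ => (f ξ)^3 * (iteratedDeriv 3 f ξ)^2)
        (fun ξ => (G0 γ ξ)^3 * (G3 γ ξ)^2) (Set.uIcc δ (1/2 : ℝ)) := by
      intro ξ hξ
      have hξ' := hsub hξ
      simp only
      rw [hfeq ξ hξ', hiter3 ξ hξ']
    rw [intervalIntegral.integral_congr hEqOn]
    exact intervalIntegral.integral_eq_sub_of_hasDerivAt
      (fun ξ hξ => HH_hasDeriv γ (hsub hξ))
      (((integrand_contOn γ).mono hsub).intervalIntegrable)
  have hmem : Set.Ioo (0:ℝ) (1/2) ∈ 𝓝[>] (0:ℝ) :=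
    Ioo_mem_nhdsGT_of_mem (by constructor <;> norm_num)
  have hinv : ∀ k : ℕ, k ≠ 0 → Tendsto (fun δ => ((Vv δ)^k)⁻¹) (𝓝[>] (0:ℝ)) (𝓝 0) :=
    fun k hk => ((tendsto_pow_atTop hk).comp Vv_tendsto).inv_tendsto_atTop
  refine ⟨⟨-HH γ (1/2), ?_⟩, ?_, ?_⟩
  · -- existence of limit
    have href : Tendsto (fun δ => -HH γ (1/2) - (γ^5/9)*((Vv δ)^1)⁻¹
        - (γ^5/6)*((Vv δ)^4)⁻¹ + (10*γ^5/243)*((Vv δ)^10)⁻¹)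
        (𝓝[>] (0:ℝ)) (𝓝 (-HH γ (1/2))) := by
      have := (((tendsto_const_nhds (x := -HH γ (1/2))).sub ((hinv 1 one_ne_zero).const_mul (γ^5/9))).sub
        ((hinv 4 (by norm_num)).const_mul (γ^5/6))).add
        ((hinv 10 (by norm_num)).const_mul (10*γ^5/243))
      simpa using this
    refine Tendsto.congr' ?_ href
    filter_upwards [hmem] with δ hδ
    have h1 : δ < 1 := lt_trans hδ.2 (by norm_num)
    have hδ' : δ ∈ Set.Ioo (0:ℝ) 1 := ⟨hδ.1, h1⟩
    have ht : Vv δ ≠ 0 := (Vv_pos hδ').ne'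
    rw [hderiv1 hδ', hInt δ hδ]
    simp only [G1, HH]
    field_simp
    ring
  · -- second component
    have href : Tendsto (fun δ => 1 - (2/3)*((Vv δ)^3)⁻¹ + (1/9)*((Vv δ)^6)⁻¹)
        (𝓝[>] (0:ℝ)) (𝓝 1) := by
      have := ((tendsto_const_nhds (x := (1:ℝ))).sub ((hinv 3 (by norm_num)).const_mul (2/3))).add
        ((hinv 6 (by norm_num)).const_mul (1/9))
      simpa using this
    refine Tendsto.congr' ?_ href
    filter_upwards [hmem] with δ hδ
    have h1 : δ < 1 := lt_trans hδ.2 (by norm_num)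
    have hδ' : δ ∈ Set.Ioo (0:ℝ) 1 := ⟨hδ.1, h1⟩
    have ht : Vv δ ≠ 0 := (Vv_pos hδ').ne'
    rw [hderiv1 hδ', logpow_eq hδ.1 h1]
    simp only [G1]
    field_simp
    ring
  · -- third component
    have href : Tendsto (fun δ => 1 + (6*HH γ (1/2)/γ^5)*((Vv δ)^2)⁻¹
        + (10/9)*((Vv δ)^6)⁻¹ - (20/81)*((Vv δ)^12)⁻¹) (𝓝[>] (0:ℝ)) (𝓝 1) := by
      have := (((tendsto_const_nhds (x := (1:ℝ))).add ((hinv 2 (by norm_num)).const_mul (6*HH γ (1/2)/γ^5))).add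
        ((hinv 6 (by norm_num)).const_mul (10/9))).sub
        ((hinv 12 (by norm_num)).const_mul (20/81))
      simpa using this
    refine Tendsto.congr' ?_ href
    filter_upwards [hmem] with δ hδ
    have h1 : δ < 1 := lt_trans hδ.2 (by norm_num)
    have hδ' : δ ∈ Set.Ioo (0:ℝ) 1 := ⟨hδ.1, h1⟩
    have ht : Vv δ ≠ 0 := (Vv_pos hδ').ne'
    rw [hInt δ hδ, logpow_eq hδ.1 h1]
    simp only [HH]
    field_simp
    ring
end

section
/- Let γ > 0 and define f : (0,1) → ℝ by f(ξ) = γ·ξ·(ln(1/ξ))^{1/3}. Then lim_{ξ→0⁺} (d/dξ)[f(ξ)³·f'''(ξ)] / f'(ξ) = γ³/3. -/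
open Real Filter Set Topology

noncomputable def tfun (x : ℝ) : ℝ := -Real.log x
noncomputable def pfun (x : ℝ) : ℝ := tfun x ^ ((1:ℝ)/3)

noncomputable def F0 (γ x : ℝ) : ℝ := γ * (x * pfun x)
noncomputable def F1 (γ x : ℝ) : ℝ := γ * (pfun x * (1 - (3 * tfun x)⁻¹))
noncomputable def F2 (γ x : ℝ) : ℝ :=
  -(γ * pfun x / x * ((3 * tfun x)⁻¹ + 2 * (9 * tfun x ^ 2)⁻¹))
noncomputable def F3 (γ x : ℝ) : ℝ :=
  γ * pfun x / x ^ 2 * ((3 * tfun x)⁻¹ - 10 * (27 * tfun x ^ 3)⁻¹)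
noncomputable def GG (γ x : ℝ) : ℝ :=
  γ ^ 4 * (x * (pfun x * (3⁻¹ - 10 * (27 * tfun x ^ 2)⁻¹)))
noncomputable def GG' (γ x : ℝ) : ℝ :=
  γ ^ 4 * pfun x * (3⁻¹ - (9 * tfun x)⁻¹ - 10 * (27 * tfun x ^ 2)⁻¹ - 50 * (81 * tfun x ^ 3)⁻¹)

lemma hasDerivAt_tfun {x : ℝ} (hx : 0 < x) : HasDerivAt tfun (-x⁻¹) x :=
  (Real.hasDerivAt_log hx.ne').neg

lemma hasDerivAt_pfun {x : ℝ} (hx : 0 < x) (ht : 0 < tfun x) :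
    HasDerivAt pfun (-(pfun x / (3 * tfun x * x))) x := by
  have h := (Real.hasDerivAt_rpow_const (x := tfun x) (p := (1:ℝ)/3)
    (Or.inl ht.ne')).comp x (hasDerivAt_tfun hx)
  refine h.congr_deriv ?_
  unfold pfun
  rw [show (1:ℝ)/3 - 1 = (1:ℝ)/3 + (-1) by ring, Real.rpow_add ht, Real.rpow_neg_one]
  field_simp

lemma cube_pfun {x : ℝ} (ht : 0 < tfun x) : pfun x ^ 3 = tfun x := by
  unfold pfun
  rw [← Real.rpow_natCast (tfun x ^ ((1:ℝ)/3)) 3, ← Real.rpow_mul ht.le]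
  norm_num

lemma hd0 (γ : ℝ) {x : ℝ} (hx : 0 < x) (ht : 0 < tfun x) :
    HasDerivAt (F0 γ) (F1 γ x) x := by
  have h := ((hasDerivAt_id x).mul (hasDerivAt_pfun hx ht)).const_mul γ
  refine h.congr_deriv ?_
  dsimp only [Pi.add_apply, Pi.sub_apply, Pi.mul_apply, Pi.inv_apply, Pi.div_apply, Pi.pow_apply, Pi.neg_apply, id]
  unfold F1
  field_simp
  ring

lemma hd1 (γ : ℝ) {x : ℝ} (hx : 0 < x) (ht : 0 < tfun x) :
    HasDerivAt (F1 γ) (F2 γ x) x := by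
  have hinv := ((hasDerivAt_tfun hx).const_mul 3).inv (by positivity)
  have h := ((hasDerivAt_pfun hx ht).mul ((hasDerivAt_const x 1).sub hinv)).const_mul γ
  refine h.congr_deriv ?_
  dsimp only [Pi.add_apply, Pi.sub_apply, Pi.mul_apply, Pi.inv_apply, Pi.div_apply, Pi.pow_apply, Pi.neg_apply, id]
  unfold F2
  field_simp
  ring

lemma hd2 (γ : ℝ) {x : ℝ} (hx : 0 < x) (ht : 0 < tfun x) :
    HasDerivAt (F2 γ) (F3 γ x) x := by
  have hA := ((hasDerivAt_pfun hx ht).const_mul γ).div (hasDerivAt_id x) hx.ne'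
  have hB1 := ((hasDerivAt_tfun hx).const_mul 3).inv (by positivity)
  have hB2 := (((hasDerivAt_tfun hx).pow 2).const_mul 9).inv (mul_ne_zero (by norm_num) (pow_ne_zero _ ht.ne')) |>.const_mul 2
  have h := ((hA.mul (hB1.add hB2)).neg)
  refine h.congr_deriv ?_
  dsimp only [Pi.add_apply, Pi.sub_apply, Pi.mul_apply, Pi.inv_apply, Pi.div_apply, Pi.pow_apply, Pi.neg_apply, id]
  unfold F3
  field_simp
  ring

lemma hdG (γ : ℝ) {x : ℝ} (hx : 0 < x) (ht : 0 < tfun x) :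
    HasDerivAt (GG γ) (GG' γ x) x := by
  have hC := (hasDerivAt_const x (3:ℝ)⁻¹).sub
    ((((hasDerivAt_tfun hx).pow 2).const_mul 27).inv (mul_ne_zero (by norm_num) (pow_ne_zero _ ht.ne')) |>.const_mul 10)
  have h := ((hasDerivAt_id x).mul ((hasDerivAt_pfun hx ht).mul hC)).const_mul (γ ^ 4)
  refine h.congr_deriv ?_
  dsimp only [Pi.add_apply, Pi.sub_apply, Pi.mul_apply, Pi.inv_apply, Pi.div_apply, Pi.pow_apply, Pi.neg_apply, id]
  unfold GG'
  field_simp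
  ring

lemma GG_eq (γ : ℝ) {x : ℝ} (hx : 0 < x) (ht : 0 < tfun x) :
    F0 γ x ^ 3 * F3 γ x = GG γ x := by
  have h1 : F0 γ x ^ 3 = γ ^ 3 * x ^ 3 * tfun x := by
    unfold F0
    rw [mul_pow, mul_pow, cube_pfun ht]
    ring
  rw [h1]
  unfold F3 GG
  field_simp

set_option maxHeartbeats 1000000 in
/-- For `γ > 0` and `f(ξ) = γ ξ (ln(1/ξ))^{1/3}` on `(0,1)`,
`lim_{ξ→0⁺} (f³ f''')'(ξ) / f'(ξ) = γ^3/3`. -/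
theorem stmt_7 (γ : ℝ) (hγ : 0 < γ)
    (f : ℝ → ℝ) (hf : ∀ ξ ∈ Set.Ioo (0:ℝ) 1, f ξ = γ * ξ * (Real.log (1/ξ)) ^ ((1:ℝ)/3)) :
    Tendsto (fun ξ => deriv (fun x => (f x)^3 * iteratedDeriv 3 f x) ξ / deriv f ξ)
      (𝓝[>] 0) (𝓝 (γ^3 / 3)) := by
  set s : Set ℝ := Ioo (0:ℝ) (Real.exp (-1)) with hs
  have hsopen : IsOpen s := isOpen_Ioo
  have he1 : Real.exp (-1) < 1 := Real.exp_lt_one_iff.mpr (by norm_num)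
  have hmem : ∀ x ∈ s, 0 < x ∧ 1 < tfun x := by
    intro x hx
    refine ⟨hx.1, ?_⟩
    have : Real.log x < Real.log (Real.exp (-1)) := Real.log_lt_log hx.1 hx.2
    rw [Real.log_exp] at this
    unfold tfun; linarith
  -- f agrees with F0 on s
  have hfF0 : ∀ x ∈ s, f x = F0 γ x := by
    intro x hx
    obtain ⟨hx0, ht⟩ := hmem x hx
    have hx1 : x < 1 := lt_trans hx.2 he1
    rw [hf x ⟨hx0, hx1⟩]
    unfold F0 pfun tfun
    rw [one_div, Real.log_inv]
    ring
  -- derivative equalities on s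
  have key : ∀ (a b : ℝ → ℝ), (∀ x ∈ s, a x = b x) → ∀ x ∈ s, deriv a x = deriv b x := by
    intro a b hab x hx
    exact Filter.EventuallyEq.deriv_eq
      (Filter.eventuallyEq_of_mem (hsopen.mem_nhds hx) hab)
  have e1 : ∀ x ∈ s, deriv f x = F1 γ x := by
    intro x hx
    obtain ⟨hx0, ht⟩ := hmem x hx
    rw [key f (F0 γ) hfF0 x hx, (hd0 γ hx0 (lt_trans one_pos ht)).deriv]
  have e2 : ∀ x ∈ s, deriv (deriv f) x = F2 γ x := by
    intro x hx
    obtain ⟨hx0, ht⟩ := hmem x hx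
    rw [key _ (F1 γ) e1 x hx, (hd1 γ hx0 (lt_trans one_pos ht)).deriv]
  have e3 : ∀ x ∈ s, deriv (deriv (deriv f)) x = F3 γ x := by
    intro x hx
    obtain ⟨hx0, ht⟩ := hmem x hx
    rw [key _ (F2 γ) e2 x hx, (hd2 γ hx0 (lt_trans one_pos ht)).deriv]
  have e3' : ∀ x ∈ s, iteratedDeriv 3 f x = F3 γ x := by
    intro x hx
    rw [show (3:ℕ) = 2 + 1 from rfl, iteratedDeriv_succ,
      show (2:ℕ) = 1 + 1 from rfl, iteratedDeriv_succ, iteratedDeriv_one]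
    exact e3 x hx
  have e4 : ∀ x ∈ s, (fun y => f y ^ 3 * iteratedDeriv 3 f y) x = GG γ x := by
    intro x hx
    obtain ⟨hx0, ht⟩ := hmem x hx
    simp only
    rw [hfF0 x hx, e3' x hx]
    exact GG_eq γ hx0 (lt_trans one_pos ht)
  have e5 : ∀ x ∈ s, deriv (fun y => f y ^ 3 * iteratedDeriv 3 f y) x = GG' γ x := by
    intro x hx
    obtain ⟨hx0, ht⟩ := hmem x hx
    rw [key _ (GG γ) e4 x hx, (hdG γ hx0 (lt_trans one_pos ht)).deriv]
  -- the ratio function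
  have hse : s ∈ 𝓝[>] (0:ℝ) :=
    Ioo_mem_nhdsGT_of_mem ⟨le_refl 0, Real.exp_pos _⟩
  have hratio : ∀ x ∈ s,
      deriv (fun y => f y ^ 3 * iteratedDeriv 3 f y) x / deriv f x =
      γ ^ 3 * ((3⁻¹ - (9 * tfun x)⁻¹ - 10 * (27 * tfun x ^ 2)⁻¹ - 50 * (81 * tfun x ^ 3)⁻¹) /
        (1 - (3 * tfun x)⁻¹)) := by
    intro x hx
    obtain ⟨hx0, ht⟩ := hmem x hx
    rw [e5 x hx, e1 x hx]
    have ht0 : (0:ℝ) < tfun x := lt_trans one_pos ht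
    have hp0 : pfun x ≠ 0 := ne_of_gt (Real.rpow_pos_of_pos ht0 _)
    have hB : (1 - (3 * tfun x)⁻¹) ≠ 0 := by
      have : (3 * tfun x)⁻¹ < 1 := by
        rw [inv_lt_one_iff₀]; right; linarith
      linarith
    have hF1 : F1 γ x ≠ 0 := by
      unfold F1
      exact mul_ne_zero hγ.ne' (mul_ne_zero hp0 hB)
    have hGP : GG' γ x = (γ ^ 3 * (3⁻¹ - (9 * tfun x)⁻¹ - 10 * (27 * tfun x ^ 2)⁻¹ -
        50 * (81 * tfun x ^ 3)⁻¹)) * (γ * pfun x) := by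
      unfold GG'; ring
    have hF1' : F1 γ x = (1 - (3 * tfun x)⁻¹) * (γ * pfun x) := by
      unfold F1; ring
    rw [hGP, hF1', mul_div_mul_right _ _ (mul_ne_zero hγ.ne' hp0), mul_div_assoc]
  -- limit computation
  have hT : Tendsto tfun (𝓝[>] (0:ℝ)) atTop := by
    have := tendsto_neg_atBot_atTop.comp Real.tendsto_log_nhdsGT_zero
    exact this
  have hlimA : Tendsto (fun t : ℝ => 3⁻¹ - (9 * t)⁻¹ - 10 * (27 * t ^ 2)⁻¹ - 50 * (81 * t ^ 3)⁻¹)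
      atTop (𝓝 (3⁻¹)) := by
    have h1 : Tendsto (fun t : ℝ => (9 * t)⁻¹) atTop (𝓝 0) :=
      tendsto_inv_atTop_zero.comp (Tendsto.const_mul_atTop (by norm_num) tendsto_id)
    have hq2 : Tendsto (fun t : ℝ => (27 * t ^ 2)⁻¹) atTop (𝓝 0) :=
      tendsto_inv_atTop_zero.comp
        (Tendsto.const_mul_atTop (by norm_num) (tendsto_pow_atTop (n := 2) (by norm_num)))
    have hq3 : Tendsto (fun t : ℝ => (81 * t ^ 3)⁻¹) atTop (𝓝 0) :=
      tendsto_inv_atTop_zero.comp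
        (Tendsto.const_mul_atTop (by norm_num) (tendsto_pow_atTop (n := 3) (by norm_num)))
    have h2 := hq2.const_mul 10
    have h3 := hq3.const_mul 50
    have := ((tendsto_const_nhds (x := (3:ℝ)⁻¹) (f := (atTop : Filter ℝ))).sub h1).sub h2 |>.sub h3
    simpa using this
  have hlimB : Tendsto (fun t : ℝ => 1 - (3 * t)⁻¹) atTop (𝓝 1) := by
    have h1 : Tendsto (fun t : ℝ => (3 * t)⁻¹) atTop (𝓝 0) :=
      tendsto_inv_atTop_zero.comp (Tendsto.const_mul_atTop (by norm_num) tendsto_id)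
    simpa using tendsto_const_nhds.sub h1
  have hlim : Tendsto (fun x => γ ^ 3 * ((3⁻¹ - (9 * tfun x)⁻¹ - 10 * (27 * tfun x ^ 2)⁻¹ -
      50 * (81 * tfun x ^ 3)⁻¹) / (1 - (3 * tfun x)⁻¹))) (𝓝[>] (0:ℝ)) (𝓝 (γ ^ 3 / 3)) := by
    have := (((hlimA.div hlimB one_ne_zero).const_mul (γ ^ 3)).comp hT)
    have heq : γ ^ 3 * (3⁻¹ / 1) = γ ^ 3 / 3 := by rw [div_one, div_eq_mul_inv]
    rw [heq] at this
    exact this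
  refine Tendsto.congr' ?_ hlim
  filter_upwards [hse] with x hx
  exact (hratio x hx).symm
end

section
/- Let n ∈ (0,3) and b > 0, and for y > 0 define Q(y) = ∫_y^∞ 1/(z² + b·z^{n−1}) dz. Then Q is Lebesgue integrable on (0,1), the iterated integral ∫₀^y ∫₀^{z} Q(w) dw dz is finite for every y > 0, and lim_{y→∞} (∫₀^y ∫₀^{z} Q(w) dw dz)/(y·ln y) = 1. -/
open Real Filter Set Topology MeasureTheory

variable {n b : ℝ}

private lemma fd_pos (hb : 0 < b) {z : ℝ} (hz : 0 < z) :
    0 < z^2 + b * z ^ (n-1) := by positivity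

private lemma fd_cont (hb : 0 < b) :
    ContinuousOn (fun z : ℝ => (z^2 + b * z ^ (n-1))⁻¹) (Ioi 0) := by
  apply ContinuousOn.inv₀
  · exact (continuous_pow 2).continuousOn.add
      (continuousOn_const.mul (fun x hx => (Real.continuousAt_rpow_const x _ (Or.inl (ne_of_gt hx))).continuousWithinAt))
  · exact fun z hz => ne_of_gt (fd_pos hb hz)

private lemma fd_le (hb : 0 < b) {z : ℝ} (hz : 0 < z) :
    (z^2 + b * z ^ (n-1))⁻¹ ≤ z ^ (-2 : ℝ) := by
  rw [Real.rpow_neg hz.le, show (2:ℝ) = ((2:ℕ):ℝ) by norm_num, Real.rpow_natCast]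
  exact inv_anti₀ (by positivity) (by nlinarith [Real.rpow_pos_of_pos hz (n-1), sq_nonneg z])

private lemma fd_int (hb : 0 < b) {y : ℝ} (hy : 0 < y) :
    IntegrableOn (fun z : ℝ => (z^2 + b * z ^ (n-1))⁻¹) (Ioi y) := by
  apply Integrable.mono' (integrableOn_Ioi_rpow_of_lt (by norm_num : (-2:ℝ) < -1) hy)
  · exact ((fd_cont hb).mono (Ioi_subset_Ioi hy.le)).aestronglyMeasurable measurableSet_Ioi
  · filter_upwards [ae_restrict_mem measurableSet_Ioi] with z hz
    have hz0 : 0 < z := hy.trans hz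
    rw [Real.norm_eq_abs, abs_of_pos (by positivity)]
    exact fd_le hb hz0

private lemma Qi_nonneg (hb : 0 < b) {y : ℝ} (hy : 0 < y) :
    0 ≤ ∫ z in Ioi y, (z^2 + b * z ^ (n-1))⁻¹ := by
  apply setIntegral_nonneg measurableSet_Ioi
  exact fun z hz => le_of_lt (inv_pos.2 (fd_pos hb (hy.trans hz)))

private lemma Qi_le_inv (hb : 0 < b) {y : ℝ} (hy : 0 < y) :
    ∫ z in Ioi y, (z^2 + b * z ^ (n-1))⁻¹ ≤ y⁻¹ := by
  have h1 : ∫ z in Ioi y, (z:ℝ) ^ (-2:ℝ) = y⁻¹ := by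
    rw [integral_Ioi_rpow_of_lt (by norm_num) hy]
    norm_num [Real.rpow_neg_one]
  rw [← h1]
  apply setIntegral_mono_on (fd_int hb hy)
    (integrableOn_Ioi_rpow_of_lt (by norm_num) hy) measurableSet_Ioi
  exact fun z hz => fd_le hb (hy.trans hz)

private lemma Qi_anti (hb : 0 < b) {y₁ y₂ : ℝ} (hy₁ : 0 < y₁) (h : y₁ ≤ y₂) :
    ∫ z in Ioi y₂, (z^2 + b * z ^ (n-1))⁻¹ ≤ ∫ z in Ioi y₁, (z^2 + b * z ^ (n-1))⁻¹ := by
  apply setIntegral_mono_set (fd_int hb hy₁)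
  · filter_upwards [ae_restrict_mem measurableSet_Ioi] with z hz
    have := hy₁.trans hz
    exact le_of_lt (by positivity)
  · exact HasSubset.Subset.eventuallyLE (Ioi_subset_Ioi h)

private lemma Qi_small (hn : n ∈ Set.Ioo (0:ℝ) 3) (hb : 0 < b) {y : ℝ} (hy : 0 < y) (hy1 : y ≤ 1) :
    ∫ z in Ioi y, (z^2 + b * z ^ (n-1))⁻¹
      ≤ 1 + b⁻¹ * (2 * y ^ (1 - max (n-1) (3/2 : ℝ))) := by
  set β := max (n-1) (3/2 : ℝ) with hβ
  have hβ1 : (3/2 : ℝ) ≤ β := le_max_right _ _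
  have hβ2 : β < 2 := max_lt (by linarith [hn.2]) (by norm_num)
  have hβn : n - 1 ≤ β := le_max_left _ _
  have hsplit : Ioi y = Ioc y 1 ∪ Ioi 1 := (Set.Ioc_union_Ioi_eq_Ioi hy1).symm
  have hint1 : IntegrableOn (fun z : ℝ => (z^2 + b * z ^ (n-1))⁻¹) (Ioc y 1) :=
    (fd_int hb hy).mono_set (Ioc_subset_Ioi_self)
  have hint2 : IntegrableOn (fun z : ℝ => (z^2 + b * z ^ (n-1))⁻¹) (Ioi 1) :=
    fd_int hb one_pos
  rw [hsplit, setIntegral_union (Ioc_disjoint_Ioi le_rfl) measurableSet_Ioi hint1 hint2]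
  have h2 : ∫ z in Ioi (1:ℝ), (z^2 + b * z ^ (n-1))⁻¹ ≤ 1 := by
    simpa using Qi_le_inv hb one_pos
  have hrint : IntegrableOn (fun z : ℝ => z ^ (-β)) (Ioc y 1) := by
    apply ((ContinuousOn.integrableOn_Icc ?_)).mono_set Ioc_subset_Icc_self
    intro z hz
    exact (Real.continuousAt_rpow_const z _ (Or.inl (ne_of_gt (lt_of_lt_of_le hy hz.1)))).continuousWithinAt
  have h1 : ∫ z in Ioc y 1, (z^2 + b * z ^ (n-1))⁻¹ ≤ ∫ z in Ioc y 1, b⁻¹ * z ^ (-β) := by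
    apply setIntegral_mono_on hint1 (hrint.const_mul _) measurableSet_Ioc
    intro z hz
    have hz0 : 0 < z := hy.trans hz.1
    have step1 : (z^2 + b * z ^ (n-1))⁻¹ ≤ (b * z ^ (n-1))⁻¹ := by
      apply inv_anti₀ (by positivity)
      nlinarith [sq_nonneg z]
    have step2 : (b * z ^ (n-1))⁻¹ = b⁻¹ * z ^ (-(n-1)) := by
      rw [mul_inv, Real.rpow_neg hz0.le]
    have step3 : z ^ (-(n-1)) ≤ z ^ (-β) :=
      Real.rpow_le_rpow_of_exponent_ge hz0 hz.2 (neg_le_neg hβn)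
    calc (z^2 + b * z ^ (n-1))⁻¹ ≤ b⁻¹ * z ^ (-(n-1)) := by rw [← step2]; exact step1
      _ ≤ b⁻¹ * z ^ (-β) := by
          exact mul_le_mul_of_nonneg_left step3 (by positivity)
  have h3 : ∫ z in Ioc y 1, b⁻¹ * z ^ (-β) ≤ b⁻¹ * (2 * y ^ (1 - β)) := by
    rw [integral_const_mul]
    apply mul_le_mul_of_nonneg_left _ (by positivity)
    have hIoc : ∫ z in Ioc y 1, z ^ (-β) = ∫ z in y..1, z ^ (-β) := by
      rw [intervalIntegral.integral_of_le hy1]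
    rw [hIoc, integral_rpow (Or.inr ⟨by intro h; rw [show (-1:ℝ) = -1 by norm_num] at h; nlinarith,
      by rw [Set.uIcc_of_le hy1]; intro h; exact absurd h.1 (not_le.2 hy)⟩)]
    have hne : -β + 1 ≠ 0 := by intro h; nlinarith
    rw [Real.one_rpow]
    have hpow : y ^ (-β + 1) = y ^ (1 - β) := by ring_nf
    rw [hpow]
    have hynn : 0 ≤ y ^ (1-β) := Real.rpow_nonneg hy.le _
    rw [div_le_iff_of_neg (by nlinarith : -β + 1 < 0)]
    nlinarith
  linarith

private lemma Qn_intOn (hn : n ∈ Set.Ioo (0:ℝ) 3) (hb : 0 < b) {c : ℝ} (hc : 0 < c) :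
    IntegrableOn (fun y => ∫ z in Ioi y, (z^2 + b * z ^ (n-1))⁻¹) (Ioo 0 c) := by
  set β := max (n-1) (3/2 : ℝ) with hβ
  have hβ2 : β < 2 := max_lt (by linarith [hn.2]) (by norm_num)
  have hmeas : AEMeasurable (fun y => ∫ z in Ioi y, (z^2 + b * z ^ (n-1))⁻¹)
      (volume.restrict (Ioo 0 c)) := by
    apply aemeasurable_restrict_of_antitoneOn measurableSet_Ioo
    exact fun y₁ h₁ y₂ _ h12 => Qi_anti hb h₁.1 h12
  have hg : IntegrableOn (fun y : ℝ => 1 + b⁻¹ * (2 * y ^ (1 - β))) (Ioo 0 c) := by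
    apply Integrable.add (integrableOn_const (C := (1:ℝ)) measure_Ioo_lt_top.ne)
    apply Integrable.const_mul
    apply Integrable.const_mul
    exact ((intervalIntegral.intervalIntegrable_rpow' (a := 0) (b := c)
      (by linarith : (-1:ℝ) < 1 - β)).1).mono_set Ioo_subset_Ioc_self
  apply Integrable.mono' hg (hmeas.aestronglyMeasurable)
  filter_upwards [ae_restrict_mem measurableSet_Ioo] with y hy
  rw [Real.norm_eq_abs, abs_of_nonneg (Qi_nonneg hb hy.1)]
  rcases le_or_gt y 1 with h1 | h1
  · exact Qi_small hn hb hy.1 h1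
  · have h2 : (∫ z in Ioi y, (z^2 + b * z ^ (n-1))⁻¹) ≤ 1 := by
      refine (Qi_le_inv hb hy.1).trans ?_
      rw [inv_le_one_iff₀]; right; linarith
    have h3 : 0 ≤ b⁻¹ * (2 * y ^ (1-β)) := by positivity
    linarith

private lemma Qi_lower (hn : n ∈ Set.Ioo (0:ℝ) 3) (hb : 0 < b) {w : ℝ} (hw : 1 ≤ w) :
    w⁻¹ - ∫ z in Ioi w, (z^2 + b * z ^ (n-1))⁻¹ ≤ (b/(4-n)) * w ^ (n-4) := by
  have hw0 : (0:ℝ) < w := lt_of_lt_of_le one_pos hw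
  have hn3 : n < 3 := hn.2
  have hintf := fd_int (n := n) hb hw0
  have hint2 : IntegrableOn (fun z : ℝ => z ^ (-2:ℝ)) (Ioi w) :=
    integrableOn_Ioi_rpow_of_lt (by norm_num) hw0
  have hint5 : IntegrableOn (fun z : ℝ => z ^ (n-5)) (Ioi w) :=
    integrableOn_Ioi_rpow_of_lt (by linarith) hw0
  have hinv : ∫ z in Ioi w, (z:ℝ) ^ (-2:ℝ) = w⁻¹ := by
    rw [integral_Ioi_rpow_of_lt (by norm_num) hw0]
    norm_num [Real.rpow_neg_one]
  have key : w⁻¹ - (∫ z in Ioi w, (z^2 + b * z ^ (n-1))⁻¹)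
      = ∫ z in Ioi w, ((z:ℝ) ^ (-2:ℝ) - (z^2 + b * z ^ (n-1))⁻¹) := by
    rw [integral_sub hint2 hintf, hinv]
  rw [key]
  have hb5 : ∫ z in Ioi w, b * (z:ℝ) ^ (n-5) = (b/(4-n)) * w ^ (n-4) := by
    rw [integral_const_mul, integral_Ioi_rpow_of_lt (by linarith) hw0]
    have h44 : n - 5 + 1 = n - 4 := by ring
    rw [h44, show (4:ℝ)-n = -(n-4) from by ring, div_neg]
    ring
  rw [← hb5]
  apply setIntegral_mono_on (hint2.sub hintf) (hint5.const_mul b) measurableSet_Ioi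
  intro z hz
  simp only [Pi.sub_apply]
  have hz0 : (0:ℝ) < z := hw0.trans hz
  have hu : (0:ℝ) < b * z ^ (n-1) := by positivity
  have hz2 : (0:ℝ) < z^2 := by positivity
  have hrw : (z:ℝ) ^ (-2:ℝ) = (z^2)⁻¹ := by
    rw [Real.rpow_neg hz0.le, show (2:ℝ) = ((2:ℕ):ℝ) by norm_num, Real.rpow_natCast]
  rw [hrw]
  have e1 : (z^2)⁻¹ - (z^2 + b * z ^ (n-1))⁻¹ = (b * z ^ (n-1)) / (z^2 * (z^2 + b * z ^ (n-1))) := by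
    field_simp
    ring
  rw [e1]
  have e2 : b * (z:ℝ) ^ (n-5) = (b * z ^ (n-1)) / (z^2 * z^2) := by
    rw [Real.rpow_sub hz0, Real.rpow_sub hz0]
    have h4 : (z:ℝ) ^ (5:ℝ) = z^2 * z^2 * z := by
      rw [show (5:ℝ) = ((5:ℕ):ℝ) by norm_num, Real.rpow_natCast]; ring
    have h1 : (z:ℝ) ^ (1:ℝ) = z := Real.rpow_one z
    rw [h4, h1]
    field_simp
  rw [e2]
  apply div_le_div_of_nonneg_left hu.le (by positivity)
  nlinarith

private lemma F_log_bound (hn : n ∈ Set.Ioo (0:ℝ) 3) (hb : 0 < b) {y : ℝ} (hy : 1 ≤ y) :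
    |(∫ w in Ioo (0:ℝ) y, ∫ z in Ioi w, (z^2 + b * z ^ (n-1))⁻¹) - Real.log y|
      ≤ (∫ w in Ioo (0:ℝ) 1, ∫ z in Ioi w, (z^2 + b * z ^ (n-1))⁻¹) + b/((4-n)*(3-n)) := by
  have hn3 : n < 3 := hn.2
  have hC3 : (0:ℝ) < (4-n)*(3-n) := by nlinarith
  have hdisj : Disjoint (Ioo (0:ℝ) 1) (Ico 1 y) := by
    rw [Set.disjoint_left]; rintro x ⟨_, h1⟩ ⟨h2, _⟩; exact absurd h2 (not_le.2 h1)
  have hint1 : IntegrableOn (fun w => ∫ z in Ioi w, (z^2 + b * z ^ (n-1))⁻¹) (Ioo 0 1) :=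
    Qn_intOn hn hb one_pos
  have hintIco : IntegrableOn (fun w => ∫ z in Ioi w, (z^2 + b * z ^ (n-1))⁻¹) (Ico 1 y) := by
    apply (Qn_intOn hn hb (by linarith : (0:ℝ) < y + 1)).mono_set
    exact fun x hx => ⟨lt_of_lt_of_le one_pos hx.1, by linarith [hx.2]⟩
  have hsplit : (∫ w in Ioo (0:ℝ) y, ∫ z in Ioi w, (z^2 + b * z ^ (n-1))⁻¹)
      = (∫ w in Ioo (0:ℝ) 1, ∫ z in Ioi w, (z^2 + b * z ^ (n-1))⁻¹)
        + ∫ w in Ico 1 y, ∫ z in Ioi w, (z^2 + b * z ^ (n-1))⁻¹ := by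
    rw [← Set.Ioo_union_Ico_eq_Ioo zero_lt_one hy,
      setIntegral_union hdisj measurableSet_Ico hint1 hintIco]
  have hinvIco : IntegrableOn (fun w : ℝ => w⁻¹) (Ico 1 y) := by
    apply ((ContinuousOn.integrableOn_Icc (f := fun w : ℝ => w⁻¹) ?_)).mono_set Ico_subset_Icc_self
    exact continuousOn_inv₀.mono (fun x hx => ne_of_gt (lt_of_lt_of_le one_pos hx.1))
  have hlog : ∫ w in Ico (1:ℝ) y, w⁻¹ = Real.log y := by
    rw [MeasureTheory.setIntegral_congr_set Ico_ae_eq_Ioc, ← intervalIntegral.integral_of_le hy,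
      integral_inv (by rw [Set.uIcc_of_le hy]; intro h; linarith [h.1] : (0:ℝ) ∉ Set.uIcc 1 y)]
    rw [div_one]
  have hrint : IntegrableOn (fun w : ℝ => (b/(4-n)) * w ^ (n-4)) (Ioi 1) :=
    (integrableOn_Ioi_rpow_of_lt (by linarith) one_pos).const_mul _
  have hbnd : |∫ w in Ico (1:ℝ) y, ((∫ z in Ioi w, (z^2 + b * z ^ (n-1))⁻¹) - w⁻¹)|
      ≤ b/((4-n)*(3-n)) := by
    have h1 : |∫ w in Ico (1:ℝ) y, ((∫ z in Ioi w, (z^2 + b * z ^ (n-1))⁻¹) - w⁻¹)|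
        ≤ ∫ w in Ico (1:ℝ) y, |(∫ z in Ioi w, (z^2 + b * z ^ (n-1))⁻¹) - w⁻¹| := by
      simpa [Real.norm_eq_abs] using norm_integral_le_integral_norm
        (μ := volume.restrict (Ico (1:ℝ) y))
        (f := fun w : ℝ => (∫ z in Ioi w, (z^2 + b * z ^ (n-1))⁻¹) - w⁻¹)
    have h2 : ∫ w in Ico (1:ℝ) y, |(∫ z in Ioi w, (z^2 + b * z ^ (n-1))⁻¹) - w⁻¹|
        ≤ ∫ w in Ico (1:ℝ) y, (b/(4-n)) * w ^ (n-4) := by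
      have hrIco : IntegrableOn (fun w : ℝ => (b/(4-n)) * w ^ (n-4)) (Ico 1 y) := by
        apply ((ContinuousOn.integrableOn_Icc ?_)).mono_set Ico_subset_Icc_self
        apply ContinuousOn.mul continuousOn_const
        intro x hx
        exact (Real.continuousAt_rpow_const x _ (Or.inl (ne_of_gt (lt_of_lt_of_le one_pos hx.1)))).continuousWithinAt
      apply setIntegral_mono_on ((hintIco.sub hinvIco).abs) hrIco measurableSet_Ico
      intro w hw
      simp only [Pi.sub_apply]
      have hw1 : (1:ℝ) ≤ w := hw.1
      have hQle := Qi_le_inv (n := n) hb (lt_of_lt_of_le one_pos hw1)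
      rw [abs_of_nonpos (by linarith)]
      have := Qi_lower hn hb hw1
      calc -((∫ z in Ioi w, (z^2 + b * z ^ (n-1))⁻¹) - w⁻¹)
          = w⁻¹ - ∫ z in Ioi w, (z^2 + b * z ^ (n-1))⁻¹ := by ring
        _ ≤ (b/(4-n)) * w ^ (n-4) := this
    have h3 : ∫ w in Ico (1:ℝ) y, (b/(4-n)) * w ^ (n-4)
        ≤ ∫ w in Ioi (1:ℝ), (b/(4-n)) * w ^ (n-4) := by
      have h4n : (0:ℝ) < 4 - n := by linarith
      apply setIntegral_mono_set hrint
      · filter_upwards [ae_restrict_mem measurableSet_Ioi] with w hw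
        have hw0 : (0:ℝ) < w := lt_trans one_pos hw
        exact mul_nonneg (div_pos hb h4n).le (Real.rpow_nonneg hw0.le _)
      · have h0 : ∀ᵐ x : ℝ, x ≠ 1 := by
          refine (MeasureTheory.measure_eq_zero_iff_ae_notMem).mp (measure_singleton 1) |>.mono ?_
          intro x hx; simpa using hx
        filter_upwards [h0] with x hx1
        exact fun hx => lt_of_le_of_ne hx.1 (Ne.symm hx1)
    have h4 : ∫ w in Ioi (1:ℝ), (b/(4-n)) * w ^ (n-4) = b/((4-n)*(3-n)) := by
      rw [integral_const_mul, integral_Ioi_rpow_of_lt (by linarith) one_pos, Real.one_rpow]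
      have h5 : (3:ℝ) - n ≠ 0 := by intro h; linarith
      have h6 : (4:ℝ) - n ≠ 0 := by intro h; linarith
      have h7 : n - 4 + 1 ≠ 0 := by intro h; linarith
      field_simp
      ring
    linarith
  have hF1 : 0 ≤ ∫ w in Ioo (0:ℝ) 1, ∫ z in Ioi w, (z^2 + b * z ^ (n-1))⁻¹ := by
    apply setIntegral_nonneg measurableSet_Ioo
    exact fun w hw => Qi_nonneg hb hw.1
  have hIcoSub : ∫ w in Ico (1:ℝ) y, ((∫ z in Ioi w, (z^2 + b * z ^ (n-1))⁻¹) - w⁻¹)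
      = (∫ w in Ico (1:ℝ) y, ∫ z in Ioi w, (z^2 + b * z ^ (n-1))⁻¹) - Real.log y := by
    rw [integral_sub hintIco hinvIco, hlog]
  rw [hsplit]
  have := abs_le.1 hbnd
  rw [hIcoSub] at this
  rw [abs_le]
  constructor <;> [linarith [this.1]; linarith [this.2]]

/-- For `n ∈ (0,3)`, `b > 0` and `Q(y) = ∫_y^∞ dz/(z² + b z^{n−1})`: `Q` is Lebesgue
integrable on `(0,1)`, the iterated integral `∫₀^y ∫₀^z Q(w) dw dz` is finite for every
`y > 0`, and it is asymptotic to `y ln y` as `y → ∞`. -/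
theorem stmt_14 (n b : ℝ) (hn : n ∈ Set.Ioo (0:ℝ) 3) (hb : 0 < b)
    (Q : ℝ → ℝ)
    (hQ : ∀ y : ℝ, 0 < y → Q y = ∫ z in Set.Ioi y, 1 / (z^2 + b * z ^ (n - 1))) :
    IntegrableOn Q (Set.Ioo 0 1) ∧
    (∀ y : ℝ, 0 < y → IntegrableOn Q (Set.Ioo 0 y) ∧
      IntegrableOn (fun z => ∫ w in Set.Ioo (0:ℝ) z, Q w) (Set.Ioo 0 y)) ∧
    Tendsto (fun y : ℝ =>
        (∫ z in Set.Ioo (0:ℝ) y, ∫ w in Set.Ioo (0:ℝ) z, Q w) / (y * Real.log y))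
      atTop (𝓝 1) := by
  have hn3 : n < 3 := hn.2
  have hQeq : ∀ y : ℝ, 0 < y → Q y = ∫ z in Ioi y, (z^2 + b * z ^ (n-1))⁻¹ := by
    intro y hy; simpa [one_div] using hQ y hy
  have hQint : ∀ c : ℝ, 0 < c → IntegrableOn Q (Ioo 0 c) := by
    intro c hc
    exact (Qn_intOn hn hb hc).congr_fun (fun y hy => (hQeq y hy.1).symm) measurableSet_Ioo
  set F : ℝ → ℝ := fun c => ∫ w in Ioo (0:ℝ) c, Q w with hFdef
  have hFcongr : ∀ c : ℝ,
      F c = ∫ w in Ioo (0:ℝ) c, ∫ z in Ioi w, (z^2 + b * z ^ (n-1))⁻¹ := by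
    intro c
    apply setIntegral_congr_fun measurableSet_Ioo
    intro w hw; exact hQeq w hw.1
  have hFnonneg : ∀ c, 0 ≤ F c := by
    intro c; apply setIntegral_nonneg measurableSet_Ioo
    intro w hw; rw [hQeq w hw.1]; exact Qi_nonneg hb hw.1
  have hFmono : Monotone F := by
    intro c1 c2 h
    rcases le_or_gt c2 0 with h2 | h2
    · have e1 : Ioo (0:ℝ) c1 = ∅ := Ioo_eq_empty (by intro hlt; linarith)
      have e2 : Ioo (0:ℝ) c2 = ∅ := Ioo_eq_empty (by intro hlt; linarith)
      simp [hFdef, e1, e2]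
    · apply setIntegral_mono_set (hQint c2 h2)
      · filter_upwards [ae_restrict_mem measurableSet_Ioo] with w hw
        rw [hQeq w hw.1]; exact Qi_nonneg hb hw.1
      · exact HasSubset.Subset.eventuallyLE (Ioo_subset_Ioo_right h)
  have hFintOn : ∀ y : ℝ, 0 < y → IntegrableOn F (Ioo 0 y) := by
    intro y hy
    apply Integrable.mono' (g := fun _ => F y)
      (integrableOn_const (C := F y) measure_Ioo_lt_top.ne)
    · exact (hFmono.measurable).aestronglyMeasurable
    · filter_upwards [ae_restrict_mem measurableSet_Ioo] with c hc
      rw [Real.norm_eq_abs, abs_of_nonneg (hFnonneg c)]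
      exact hFmono hc.2.le
  refine ⟨hQint 1 one_pos, fun y hy => ⟨hQint y hy, hFintOn y hy⟩, ?_⟩
  -- asymptotics
  set K : ℝ := F 1 + b/((4-n)*(3-n)) with hKdef
  have hKnonneg : 0 ≤ K := by
    have : (0:ℝ) < b/((4-n)*(3-n)) := div_pos hb (by nlinarith)
    have := hFnonneg 1
    rw [hKdef]; linarith
  have hFlog : ∀ z : ℝ, 1 ≤ z → |F z - Real.log z| ≤ K := by
    intro z hz
    rw [hFcongr z, hKdef, hFcongr 1]
    exact F_log_bound hn hb hz
  set K' : ℝ := K + 1 + |F 1 + ∫ z in Ioo (0:ℝ) 1, F z| with hK'def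
  have hGbound : ∀ y : ℝ, 2 ≤ y →
      |(∫ z in Ioo (0:ℝ) y, F z)/(y * Real.log y) - 1| ≤ K' / Real.log y := by
    intro y hy2
    have hy1 : (1:ℝ) ≤ y := by linarith
    have hy0 : (0:ℝ) < y := by linarith
    have hlogpos : 0 < Real.log y := Real.log_pos (by linarith)
    have hdisj : Disjoint (Ioo (0:ℝ) 1) (Ico 1 y) := by
      rw [Set.disjoint_left]; rintro x ⟨_, h1⟩ ⟨h2, _⟩; exact absurd h2 (not_le.2 h1)
    have hFIco : IntegrableOn F (Ico 1 y) :=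
      (hFintOn (y+1) (by linarith)).mono_set
        (fun x hx => ⟨lt_of_lt_of_le one_pos hx.1, by linarith [hx.2]⟩)
    have hGsplit : (∫ z in Ioo (0:ℝ) y, F z)
        = (∫ z in Ioo (0:ℝ) 1, F z) + ∫ z in Ico 1 y, F z := by
      rw [← Set.Ioo_union_Ico_eq_Ioo zero_lt_one hy1,
        setIntegral_union hdisj measurableSet_Ico (hFintOn 1 one_pos) hFIco]
    have hlogIco : IntegrableOn Real.log (Ico 1 y) := by
      apply (ContinuousOn.integrableOn_Icc ?_).mono_set Ico_subset_Icc_self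
      intro x hx
      exact (Real.continuousAt_log (by intro h; rw [h] at hx; linarith [hx.1])).continuousWithinAt
    have hlogeval : ∫ z in Ico (1:ℝ) y, Real.log z = y * Real.log y - y + 1 := by
      rw [MeasureTheory.setIntegral_congr_set Ico_ae_eq_Ioc,
        ← intervalIntegral.integral_of_le hy1,
        integral_log]
      norm_num [Real.log_one]
    have hEbound : |∫ z in Ico (1:ℝ) y, (F z - Real.log z)| ≤ K * (y - 1) := by
      have h1 : |∫ z in Ico (1:ℝ) y, (F z - Real.log z)|
          ≤ ∫ z in Ico (1:ℝ) y, |F z - Real.log z| := by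
        simpa [Real.norm_eq_abs] using norm_integral_le_integral_norm
          (μ := volume.restrict (Ico (1:ℝ) y)) (f := fun z => F z - Real.log z)
      have h2 : ∫ z in Ico (1:ℝ) y, |F z - Real.log z| ≤ ∫ z in Ico (1:ℝ) y, K := by
        apply setIntegral_mono_on ((hFIco.sub hlogIco).abs)
          (integrableOn_const (C := K) measure_Ico_lt_top.ne) measurableSet_Ico
        intro z hz
        simp only [Pi.sub_apply]
        exact hFlog z hz.1
      have h3 : ∫ z in Ico (1:ℝ) y, (K:ℝ) = K * (y-1) := by
        rw [setIntegral_const, Real.volume_real_Ico_of_le hy1]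
        rw [smul_eq_mul]; ring
      linarith
    have hEsub : ∫ z in Ico (1:ℝ) y, (F z - Real.log z)
        = (∫ z in Ico (1:ℝ) y, F z) - (y * Real.log y - y + 1) := by
      rw [integral_sub hFIco hlogIco, hlogeval]
    have habs : |(∫ z in Ioo (0:ℝ) y, F z) - y * Real.log y| ≤ K' * y := by
      rw [hEsub] at hEbound
      have h5 := abs_le.1 hEbound
      have h6 : |∫ z in Ioo (0:ℝ) 1, F z| ≤ |F 1 + ∫ z in Ioo (0:ℝ) 1, F z| := by
        rw [abs_of_nonneg, abs_of_nonneg]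
        · linarith [hFnonneg 1]
        · have h7 : 0 ≤ ∫ z in Ioo (0:ℝ) 1, F z :=
            setIntegral_nonneg measurableSet_Ioo (fun z _ => hFnonneg z)
          linarith [hFnonneg 1]
        · exact setIntegral_nonneg measurableSet_Ioo (fun z _ => hFnonneg z)
      have h8 := abs_le.1 h6
      rw [hGsplit, abs_le]
      constructor
      · nlinarith [abs_nonneg (F 1 + ∫ z in Ioo (0:ℝ) 1, F z)]
      · nlinarith [abs_nonneg (F 1 + ∫ z in Ioo (0:ℝ) 1, F z)]
    have hyy : 0 < y * Real.log y := mul_pos hy0 hlogpos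
    have e : (∫ z in Ioo (0:ℝ) y, F z)/(y * Real.log y) - 1
        = ((∫ z in Ioo (0:ℝ) y, F z) - y * Real.log y)/(y * Real.log y) := by
      field_simp
    rw [e, abs_div, abs_of_pos hyy]
    calc |(∫ z in Ioo (0:ℝ) y, F z) - y * Real.log y| / (y * Real.log y)
        ≤ (K' * y) / (y * Real.log y) := by gcongr
      _ = K' / Real.log y := by
          rw [div_eq_div_iff hyy.ne' hlogpos.ne']; ring
  have h1 : Tendsto (fun y : ℝ => 1 - K'/Real.log y) atTop (𝓝 1) := by
    simpa using tendsto_const_nhds.sub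
      ((tendsto_const_nhds (x := K')).div_atTop Real.tendsto_log_atTop)
  have h2 : Tendsto (fun y : ℝ => 1 + K'/Real.log y) atTop (𝓝 1) := by
    simpa using tendsto_const_nhds.add
      ((tendsto_const_nhds (x := K')).div_atTop Real.tendsto_log_atTop)
  apply tendsto_of_tendsto_of_tendsto_of_le_of_le' h1 h2
  · filter_upwards [eventually_ge_atTop (2:ℝ)] with y hy
    linarith [(abs_le.1 (hGbound y hy)).1]
  · filter_upwards [eventually_ge_atTop (2:ℝ)] with y hy
    linarith [(abs_le.1 (hGbound y hy)).2]
end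

section
/- Let γ > 0 and define f : (0,1) → ℝ by f(ξ) = γ·ξ·(ln(1/ξ))^{1/3}. Then (ln(1/ξ))^{1/3}·f(ξ)³·f''(ξ)·f'''(ξ) → −γ⁵/9 as ξ → 0⁺. In particular, f(ξ)³·f''(ξ)·f'''(ξ) → 0 as ξ → 0⁺. -/
open Real Filter Set Topology

private lemma stmt15_D1 (γ : ℝ) {x : ℝ} (hx : x ∈ Set.Ioo (0:ℝ) 1) :
    HasDerivAt (fun y => γ * y * (-Real.log y) ^ ((1:ℝ)/3))
      (γ * ((-Real.log x) ^ ((1:ℝ)/3) - (1/3) * (-Real.log x) ^ (-(2:ℝ)/3))) x := by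
  have hx0 : x ≠ 0 := hx.1.ne'
  have hL : 0 < -Real.log x := by
    have := Real.log_neg hx.1 hx.2; linarith
  have hlog : HasDerivAt (fun y => -Real.log y) (-x⁻¹) x := (Real.hasDerivAt_log hx0).neg
  have hp : HasDerivAt (fun y => (-Real.log y) ^ ((1:ℝ)/3))
      ((-x⁻¹) * ((1:ℝ)/3) * (-Real.log x) ^ ((1:ℝ)/3 - 1)) x :=
    hlog.rpow_const (Or.inl hL.ne')
  have h := ((hasDerivAt_id x).const_mul γ).mul hp
  convert h using 1
  · rfl
  · rfl
  · rfl
  rw [show ((1:ℝ)/3 - 1) = (-(2:ℝ)/3) by norm_num]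
  simp only [id]
  field_simp
  ring

private lemma stmt15_D2 (γ : ℝ) {x : ℝ} (hx : x ∈ Set.Ioo (0:ℝ) 1) :
    HasDerivAt (fun y => γ * ((-Real.log y) ^ ((1:ℝ)/3) - (1/3) * (-Real.log y) ^ (-(2:ℝ)/3)))
      (-γ/3 * x⁻¹ * ((-Real.log x) ^ (-(2:ℝ)/3) + (2/3) * (-Real.log x) ^ (-(5:ℝ)/3))) x := by
  have hx0 : x ≠ 0 := hx.1.ne'
  have hL : 0 < -Real.log x := by
    have := Real.log_neg hx.1 hx.2; linarith
  have hlog : HasDerivAt (fun y => -Real.log y) (-x⁻¹) x := (Real.hasDerivAt_log hx0).neg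
  have hp1 : HasDerivAt (fun y => (-Real.log y) ^ ((1:ℝ)/3))
      ((-x⁻¹) * ((1:ℝ)/3) * (-Real.log x) ^ ((1:ℝ)/3 - 1)) x :=
    hlog.rpow_const (Or.inl hL.ne')
  have hp2 : HasDerivAt (fun y => (-Real.log y) ^ (-(2:ℝ)/3))
      ((-x⁻¹) * (-(2:ℝ)/3) * (-Real.log x) ^ (-(2:ℝ)/3 - 1)) x :=
    hlog.rpow_const (Or.inl hL.ne')
  have h := (hp1.sub (hp2.const_mul ((1:ℝ)/3))).const_mul γ
  convert h using 1
  · rfl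
  · rfl
  · rfl
  rw [show ((1:ℝ)/3 - 1) = (-(2:ℝ)/3) by norm_num,
    show (-(2:ℝ)/3 - 1) = (-(5:ℝ)/3) by norm_num]
  field_simp
  ring

private lemma stmt15_D3 (γ : ℝ) {x : ℝ} (hx : x ∈ Set.Ioo (0:ℝ) 1) :
    HasDerivAt (fun y => -γ/3 * y⁻¹ * ((-Real.log y) ^ (-(2:ℝ)/3) + (2/3) * (-Real.log y) ^ (-(5:ℝ)/3)))
      (γ/(3*x^2) * ((-Real.log x) ^ (-(2:ℝ)/3) - (10/9) * (-Real.log x) ^ (-(8:ℝ)/3))) x := by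
  have hx0 : x ≠ 0 := hx.1.ne'
  have hL : 0 < -Real.log x := by
    have := Real.log_neg hx.1 hx.2; linarith
  have hlog : HasDerivAt (fun y => -Real.log y) (-x⁻¹) x := (Real.hasDerivAt_log hx0).neg
  have hp2 : HasDerivAt (fun y => (-Real.log y) ^ (-(2:ℝ)/3))
      ((-x⁻¹) * (-(2:ℝ)/3) * (-Real.log x) ^ (-(2:ℝ)/3 - 1)) x :=
    hlog.rpow_const (Or.inl hL.ne')
  have hp5 : HasDerivAt (fun y => (-Real.log y) ^ (-(5:ℝ)/3))
      ((-x⁻¹) * (-(5:ℝ)/3) * (-Real.log x) ^ (-(5:ℝ)/3 - 1)) x :=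
    hlog.rpow_const (Or.inl hL.ne')
  have hinv : HasDerivAt (fun y => -γ/3 * y⁻¹) (-γ/3 * (-(x^2)⁻¹)) x :=
    (hasDerivAt_inv hx0).const_mul (-γ/3)
  have h := hinv.mul (hp2.add (hp5.const_mul ((2:ℝ)/3)))
  convert h using 1
  · rfl
  · rfl
  · rfl
  rw [show (-(2:ℝ)/3 - 1) = (-(5:ℝ)/3) by norm_num,
    show (-(5:ℝ)/3 - 1) = (-(8:ℝ)/3) by norm_num]
  simp only [Pi.add_apply]
  field_simp
  ring

private lemma stmt15_key (γ : ℝ) {x : ℝ} (hL : 0 < -Real.log x) (hx0 : x ≠ 0) :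
    (-Real.log x) ^ ((1:ℝ)/3) * (γ * x * (-Real.log x) ^ ((1:ℝ)/3))^3
      * (-γ/3 * x⁻¹ * ((-Real.log x) ^ (-(2:ℝ)/3) + (2/3) * (-Real.log x) ^ (-(5:ℝ)/3)))
      * (γ/(3*x^2) * ((-Real.log x) ^ (-(2:ℝ)/3) - (10/9) * (-Real.log x) ^ (-(8:ℝ)/3)))
    = -(γ^5)/9 * (1 + (2/3) * (-Real.log x)⁻¹ - (10/9) * ((-Real.log x)⁻¹)^2
        - (20/27) * ((-Real.log x)⁻¹)^3) := by
  set L : ℝ := -Real.log x with hLdef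
  set u : ℝ := L ^ ((1:ℝ)/3) with hudef
  have hu : 0 < u := Real.rpow_pos_of_pos hL _
  have h3 : u ^ 3 = L := by
    rw [hudef, ← Real.rpow_natCast (L ^ ((1:ℝ)/3)) 3, ← Real.rpow_mul hL.le]
    norm_num
  have hpow : ∀ n : ℕ, L ^ (-(n:ℝ)/3) = (u ^ n)⁻¹ := by
    intro n
    rw [hudef, neg_div, Real.rpow_neg hL.le, show ((n:ℝ)/3) = (1/3) * (n:ℝ) by ring,
      Real.rpow_mul hL.le, Real.rpow_natCast]
  have h2 : L ^ (-(2:ℝ)/3) = (u ^ 2)⁻¹ := by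
    have := hpow 2; norm_num at this ⊢; exact this
  have h5 : L ^ (-(5:ℝ)/3) = (u ^ 5)⁻¹ := by
    have := hpow 5; norm_num at this ⊢; exact this
  have h8 : L ^ (-(8:ℝ)/3) = (u ^ 8)⁻¹ := by
    have := hpow 8; norm_num at this ⊢; exact this
  rw [h2, h5, h8, ← h3]
  field_simp
  ring

/-- For `γ > 0` and `f(ξ) = γ ξ (ln(1/ξ))^{1/3}` on `(0,1)`,
`(ln(1/ξ))^{1/3} f³ f'' f''' → −γ⁵/9` and in particular `f³ f'' f''' → 0` as `ξ → 0⁺`. -/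
theorem stmt_15 (γ : ℝ) (hγ : 0 < γ)
    (f : ℝ → ℝ) (hf : ∀ ξ ∈ Set.Ioo (0:ℝ) 1, f ξ = γ * ξ * (Real.log (1/ξ)) ^ ((1:ℝ)/3)) :
    Tendsto (fun ξ => (Real.log (1/ξ)) ^ ((1:ℝ)/3) * (f ξ)^3
        * iteratedDeriv 2 f ξ * iteratedDeriv 3 f ξ) (𝓝[>] 0) (𝓝 (-(γ^5) / 9)) ∧
    Tendsto (fun ξ => (f ξ)^3 * iteratedDeriv 2 f ξ * iteratedDeriv 3 f ξ)
      (𝓝[>] 0) (𝓝 0) := by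
  have hIoo : Set.Ioo (0:ℝ) 1 ∈ 𝓝[>] (0:ℝ) :=
    Ioo_mem_nhdsGT_of_mem ⟨le_refl 0, zero_lt_one⟩
  have hfg : ∀ y ∈ Set.Ioo (0:ℝ) 1, f y = γ * y * (-Real.log y) ^ ((1:ℝ)/3) := by
    intro y hy
    rw [hf y hy, one_div, Real.log_inv]
  -- eventual equality near any point of Ioo
  have hev : ∀ x ∈ Set.Ioo (0:ℝ) 1,
      f =ᶠ[𝓝 x] fun y => γ * y * (-Real.log y) ^ ((1:ℝ)/3) :=
    fun x hx => eventually_of_mem (isOpen_Ioo.mem_nhds hx) hfg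
  have hd1 : ∀ x ∈ Set.Ioo (0:ℝ) 1, deriv f x
      = γ * ((-Real.log x) ^ ((1:ℝ)/3) - (1/3) * (-Real.log x) ^ (-(2:ℝ)/3)) :=
    fun x hx => ((hev x hx).deriv_eq).trans (stmt15_D1 γ hx).deriv
  have hev1 : ∀ x ∈ Set.Ioo (0:ℝ) 1, deriv f =ᶠ[𝓝 x]
      fun y => γ * ((-Real.log y) ^ ((1:ℝ)/3) - (1/3) * (-Real.log y) ^ (-(2:ℝ)/3)) :=
    fun x hx => eventually_of_mem (isOpen_Ioo.mem_nhds hx) hd1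
  have hd2 : ∀ x ∈ Set.Ioo (0:ℝ) 1, deriv (deriv f) x
      = -γ/3 * x⁻¹ * ((-Real.log x) ^ (-(2:ℝ)/3) + (2/3) * (-Real.log x) ^ (-(5:ℝ)/3)) :=
    fun x hx => ((hev1 x hx).deriv_eq).trans (stmt15_D2 γ hx).deriv
  have hev2 : ∀ x ∈ Set.Ioo (0:ℝ) 1, deriv (deriv f) =ᶠ[𝓝 x]
      fun y => -γ/3 * y⁻¹ * ((-Real.log y) ^ (-(2:ℝ)/3) + (2/3) * (-Real.log y) ^ (-(5:ℝ)/3)) :=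
    fun x hx => eventually_of_mem (isOpen_Ioo.mem_nhds hx) hd2
  have hd3 : ∀ x ∈ Set.Ioo (0:ℝ) 1, deriv (deriv (deriv f)) x
      = γ/(3*x^2) * ((-Real.log x) ^ (-(2:ℝ)/3) - (10/9) * (-Real.log x) ^ (-(8:ℝ)/3)) :=
    fun x hx => ((hev2 x hx).deriv_eq).trans (stmt15_D3 γ hx).deriv
  have i2 : iteratedDeriv 2 f = deriv (deriv f) := by
    rw [iteratedDeriv_succ, iteratedDeriv_one]
  have i3 : iteratedDeriv 3 f = deriv (deriv (deriv f)) := by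
    rw [iteratedDeriv_succ, i2]
  set P : ℝ → ℝ := fun t => -(γ^5)/9 * (1 + (2/3)*t - (10/9)*t^2 - (20/27)*t^3) with hP
  have hmain : ∀ x ∈ Set.Ioo (0:ℝ) 1,
      (Real.log (1/x)) ^ ((1:ℝ)/3) * (f x)^3 * iteratedDeriv 2 f x * iteratedDeriv 3 f x
        = P ((-Real.log x)⁻¹) := by
    intro x hx
    have hL : 0 < -Real.log x := by
      have := Real.log_neg hx.1 hx.2; linarith
    rw [i2, i3, hfg x hx, hd2 x hx, hd3 x hx, one_div, Real.log_inv]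
    exact stmt15_key γ hL hx.1.ne'
  have hlog_top : Tendsto (fun x : ℝ => -Real.log x) (𝓝[>] (0:ℝ)) atTop :=
    tendsto_neg_atBot_atTop.comp Real.tendsto_log_nhdsGT_zero
  have hinv0 : Tendsto (fun x : ℝ => (-Real.log x)⁻¹) (𝓝[>] (0:ℝ)) (𝓝 0) :=
    tendsto_inv_atTop_zero.comp hlog_top
  have hPc : Continuous P := by fun_prop
  have hfirst : Tendsto (fun ξ => (Real.log (1/ξ)) ^ ((1:ℝ)/3) * (f ξ)^3
      * iteratedDeriv 2 f ξ * iteratedDeriv 3 f ξ) (𝓝[>] (0:ℝ)) (𝓝 (-(γ^5) / 9)) := by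
    have h1 : Tendsto (fun x : ℝ => P ((-Real.log x)⁻¹)) (𝓝[>] (0:ℝ)) (𝓝 (P 0)) :=
      (hPc.tendsto 0).comp hinv0
    have hP0 : P 0 = -(γ^5)/9 := by simp [hP]
    rw [hP0] at h1
    exact Tendsto.congr' (eventually_of_mem hIoo fun x hx => (hmain x hx).symm) h1
  refine ⟨hfirst, ?_⟩
  have hsmall : Tendsto (fun x : ℝ => (-Real.log x) ^ (-((1:ℝ)/3))) (𝓝[>] (0:ℝ)) (𝓝 0) :=
    (tendsto_rpow_neg_atTop (by norm_num : (0:ℝ) < 1/3)).comp hlog_top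
  have h2 := hsmall.mul hfirst
  rw [zero_mul] at h2
  refine Tendsto.congr' (eventually_of_mem hIoo fun x hx => ?_) h2
  have hL : 0 < -Real.log x := by
    have := Real.log_neg hx.1 hx.2; linarith
  have hLx : Real.log (1/x) = -Real.log x := by rw [one_div, Real.log_inv]
  rw [hLx]
  have hone : (-Real.log x) ^ (-((1:ℝ)/3)) * (-Real.log x) ^ ((1:ℝ)/3) = 1 := by
    rw [← Real.rpow_add hL]; norm_num
  calc (-Real.log x) ^ (-((1:ℝ)/3)) * ((-Real.log x) ^ ((1:ℝ)/3) * (f x)^3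
        * iteratedDeriv 2 f x * iteratedDeriv 3 f x)
      = ((-Real.log x) ^ (-((1:ℝ)/3)) * (-Real.log x) ^ ((1:ℝ)/3)) * ((f x)^3
        * iteratedDeriv 2 f x * iteratedDeriv 3 f x) := by ring
    _ = (f x)^3 * iteratedDeriv 2 f x * iteratedDeriv 3 f x := by rw [hone, one_mul]
end
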